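/- arXiv:2009.14121 — 5 statements merged into one kernel-verified Lean document; each statement's English description precedes it below -/
import Mathlib

section
/- Let F : ℕ → ℂ be in standard semi-multiplicative form with threshold a_F and multiplicative part M_F. Let G : ℕ → ℂ be multiplicative with finitely many bad primes such that R_G(a) converges with R_G(a) = F(a) for all a ∈ ℕ. Then for every prime p and every v ≥ 1: G(p^{v_p(a_F)+v}) = H_G(p) + (1 − H_G(p))·G_{M_F}(p^v), where H_G is the opacity core of G and G_{M_F} is the canonical Ramanujan coefficient of M_F. -/
open Filter Finset

noncomputable def mu (n : ℕ) : ℂ := ((ArithmeticFunction.moebius n : ℤ) : ℂ)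

/-- Ramanujan sum `c_q(a) = ∑_{d ∣ gcd(q,a)} d · μ(q/d)` (Kluyver's formula). -/
noncomputable def cR (q a : ℕ) : ℂ :=
  ∑ d ∈ (Nat.gcd q a).divisors, (d : ℂ) * mu (q / d)

/-- Partial sum of the Ramanujan series `R_G(a,x) = ∑_{q ≤ x} G(q) c_q(a)`. -/
noncomputable def RS (G : ℕ → ℂ) (a : ℕ) (x : ℝ) : ℂ :=
  ∑ q ∈ Finset.Icc 1 ⌊x⌋₊, G q * cR q a

/-- Partial sum of the coprime series `S_G(a,x) = ∑_{r ≤ x, (r,a)=1} G(r) μ(r)`. -/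
noncomputable def SS (G : ℕ → ℂ) (a : ℕ) (x : ℝ) : ℂ :=
  ∑ r ∈ (Finset.Icc 1 ⌊x⌋₊).filter fun r => Nat.gcd r a = 1, G r * mu r

/-- Partial sum of the Lucht series `L_G(d,x) = ∑_{K ≤ x} μ(K) G(dK)`. -/
noncomputable def LS (G : ℕ → ℂ) (d : ℕ) (x : ℝ) : ℂ :=
  ∑ K ∈ Finset.Icc 1 ⌊x⌋₊, mu K * G (d * K)

def RTendsto (G : ℕ → ℂ) (a : ℕ) (L : ℂ) : Prop :=
  Tendsto (fun x : ℝ => RS G a x) atTop (nhds L)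

def RConv (G : ℕ → ℂ) (a : ℕ) : Prop := ∃ L, RTendsto G a L

def STendsto (G : ℕ → ℂ) (a : ℕ) (L : ℂ) : Prop :=
  Tendsto (fun x : ℝ => SS G a x) atTop (nhds L)

def SConv (G : ℕ → ℂ) (a : ℕ) : Prop := ∃ L, STendsto G a L

def LTendsto (G : ℕ → ℂ) (d : ℕ) (L : ℂ) : Prop :=
  Tendsto (fun x : ℝ => LS G d x) atTop (nhds L)

def LConv (G : ℕ → ℂ) (d : ℕ) : Prop := ∃ L, LTendsto G d L

/-- `G` is multiplicative: `G(ab) = G(a)G(b)` for coprime positive `a, b`. -/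
def IsMult (G : ℕ → ℂ) : Prop :=
  ∀ a b : ℕ, 0 < a → 0 < b → Nat.Coprime a b → G (a * b) = G a * G b

/-- `G` is completely multiplicative. -/
def IsCM (G : ℕ → ℂ) : Prop :=
  ∀ a b : ℕ, 0 < a → 0 < b → G (a * b) = G a * G b

/-- The completely multiplicative index `w_{p,G}`: the largest `w ∈ ℕ` with
`G(p^k) = G(p)^k` for all `1 ≤ k ≤ w`, and `⊤` if this holds for all `k`. -/
noncomputable def cmIndex (G : ℕ → ℂ) (p : ℕ) : ℕ∞ :=
  ⨆ w ∈ {n : ℕ | ∀ k : ℕ, 1 ≤ k → k ≤ n → G (p ^ k) = G p ^ k}, (w : ℕ∞)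

/-- The transparency index `v_{p,G}`: least `K ≥ 0` with `G(p^{K+1}) ≠ 1`, or `⊤`. -/
noncomputable def trIdx (G : ℕ → ℂ) (p : ℕ) : ℕ∞ :=
  ⨅ K ∈ {K : ℕ | G (p ^ (K + 1)) ≠ 1}, (K : ℕ∞)

/-- A prime `p` is bad for `G` iff `1 ≤ |G(p)| ≤ p`. -/
def IsBad (G : ℕ → ℂ) (p : ℕ) : Prop :=
  1 ≤ ‖G p‖ ∧ ‖G p‖ ≤ p

def IsHyperbad (G : ℕ → ℂ) (p : ℕ) : Prop :=
  p.Prime ∧ IsBad G p ∧ cmIndex G p = ⊤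

def IsSimplyBad (G : ℕ → ℂ) (p : ℕ) : Prop :=
  p.Prime ∧ IsBad G p ∧ cmIndex G p ≠ ⊤

def IsSimplyTransparent (G : ℕ → ℂ) (p : ℕ) : Prop :=
  p.Prime ∧ G p = 1 ∧ cmIndex G p ≠ ⊤

/-- The Ramanujan conductor `N(G) = ∏_{p simply bad} p^{w_{p,G}}`. -/
noncomputable def ramCond (G : ℕ → ℂ) : ℕ :=
  ∏ᶠ p ∈ {p : ℕ | IsSimplyBad G p}, p ^ (cmIndex G p).toNat

/-- The transparency conductor `N_T(G) = ∏_{p simply transparent} p^{v_{p,G}}`. -/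
noncomputable def transpCond (G : ℕ → ℂ) : ℕ :=
  ∏ᶠ p ∈ {p : ℕ | IsSimplyTransparent G p}, p ^ (trIdx G p).toNat

/-- The squarefree radical of `n`. -/
def rad (n : ℕ) : ℕ := ∏ p ∈ n.primeFactors, p

/-- Euler–Ramanujan factor `E_G(a) = ∑_{d ∣ a·rad a} G(d) c_d(a)`. -/
noncomputable def EG (G : ℕ → ℂ) (a : ℕ) : ℂ := ∑ d ∈ (a * rad a).divisors, G d * cR d a

/-- `C_G(a) = ∑_{d ∣ a} G(d) μ(d)`. -/
noncomputable def CGsum (G : ℕ → ℂ) (a : ℕ) : ℂ := ∑ d ∈ a.divisors, G d * mu d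

/-- `D_G(a) = ∑_{d ∣ a} G(d) d`. -/
noncomputable def DGsum (G : ℕ → ℂ) (a : ℕ) : ℂ := ∑ d ∈ a.divisors, G d * (d : ℂ)

/-- `U_G(a) = ∑_{d ∣ a} μ(d) G(da)`. -/
noncomputable def UGsum (G : ℕ → ℂ) (a : ℕ) : ℂ := ∑ d ∈ a.divisors, mu d * G (d * a)

/-- Eratosthenes transform `F' = F ∗ μ`. -/
noncomputable def eratos (F : ℕ → ℂ) (n : ℕ) : ℂ := ∑ d ∈ n.divisors, F d * mu (n / d)

/-- The canonical Ramanujan coefficient of `F`: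
`G_F(q) = ∏_{p ∣ q} (1 - ∑_{K=0}^{v_p(q)-1} F'(p^K)/p^K)`. -/
noncomputable def canonCoeff (F : ℕ → ℂ) (q : ℕ) : ℂ :=
  ∏ p ∈ q.primeFactors,
    (1 - ∑ K ∈ Finset.range (q.factorization p), eratos F (p ^ K) / ((p : ℂ) ^ K))

/-- The opacity core `H_G(q) = G(q·N_T(G))·μ(q)²`. -/
noncomputable def opacityCore (G : ℕ → ℂ) (q : ℕ) : ℂ :=
  G (q * transpCond G) * mu q ^ 2


/- ========== auxiliary development ========== -/

section AuxMu

lemma mu_one' : mu 1 = 1 := by simp [mu]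

lemma mu_prime' {p : ℕ} (hp : p.Prime) : mu p = -1 := by
  simp [mu, ArithmeticFunction.moebius_apply_prime hp]

lemma mu_prime_pow' {p k : ℕ} (hp : p.Prime) (hk : 2 ≤ k) : mu (p ^ k) = 0 := by
  rw [mu, ArithmeticFunction.moebius_apply_prime_pow hp (by omega)]
  simp [show k ≠ 1 by omega]

lemma mu_mul_prime {p K : ℕ} (hp : p.Prime) (hK : ¬ p ∣ K) :
    mu (p * K) = - mu K := by
  unfold mu
  rw [ArithmeticFunction.isMultiplicative_moebius.map_mul_of_coprime
    ((Nat.Prime.coprime_iff_not_dvd hp).mpr hK),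
    ArithmeticFunction.moebius_apply_prime hp]
  push_cast; ring

lemma mu_mul_prime_sq {p K : ℕ} (hp : p.Prime) (hK : p ∣ K) :
    mu (p * K) = 0 := by
  unfold mu
  rw [ArithmeticFunction.moebius_eq_zero_of_not_squarefree]
  · simp
  · intro h
    have : p * p ∣ p * K := mul_dvd_mul_left p hK
    exact hp.one_lt.ne' (Nat.isUnit_iff.mp (h p this))

lemma sum_eratos (F : ℕ → ℂ) : ∀ n : ℕ, 0 < n → ∑ d ∈ n.divisors, eratos F d = F n := by
  rw [ArithmeticFunction.sum_eq_iff_sum_smul_moebius_eq]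
  intro n hn
  rw [Nat.sum_divisorsAntidiagonal' (f := fun i j => (ArithmeticFunction.moebius i) • F j)]
  unfold eratos mu
  apply Finset.sum_congr rfl
  intro d hd
  rw [zsmul_eq_mul]
  ring

end AuxMu

section AuxRSLS

lemma RS_eq_sum_LS (G : ℕ → ℂ) (a : ℕ) (ha : 0 < a) (x : ℝ) :
    RS G a x = ∑ d ∈ a.divisors, (d : ℂ) * LS G d (x / d) := by
  set N := ⌊x⌋₊ with hN
  have hLS : ∀ d ∈ a.divisors, (d:ℂ) * LS G d (x / d)
      = ∑ K ∈ Finset.Icc 1 (N / d), (d:ℂ) * (mu K * G (d * K)) := by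
    intro d hd
    rw [LS, Finset.mul_sum]
    congr 1
    rw [show x / (d:ℝ) = x / ((d:ℕ):ℝ) by norm_num, Nat.floor_div_natCast x d]
  rw [Finset.sum_congr rfl hLS]
  unfold RS cR
  have hL : ∀ q ∈ Finset.Icc 1 N, G q * ∑ d ∈ (Nat.gcd q a).divisors, (d : ℂ) * mu (q / d)
      = ∑ d ∈ (Nat.gcd q a).divisors, G q * ((d:ℂ) * mu (q / d)) := fun q _ => Finset.mul_sum ..
  rw [Finset.sum_congr rfl hL, ← Finset.sum_sigma (Finset.Icc 1 N)
      (fun q => (Nat.gcd q a).divisors) (fun z => G z.1 * ((z.2:ℂ) * mu (z.1 / z.2))),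
    ← Finset.sum_sigma a.divisors (fun d => Finset.Icc 1 (N / d))
      (fun z => (z.1:ℂ) * (mu z.2 * G (z.1 * z.2)))]
  refine Finset.sum_nbij' (fun z => ⟨z.2, z.1 / z.2⟩) (fun z => ⟨z.1 * z.2, z.1⟩) ?_ ?_ ?_ ?_ ?_
  · rintro ⟨q, d⟩ hz
    simp only [Finset.mem_sigma, Finset.mem_Icc, Nat.mem_divisors] at hz ⊢
    obtain ⟨⟨hq1, hqN⟩, hdvd, hg0⟩ := hz
    have hdq : d ∣ q := hdvd.trans (Nat.gcd_dvd_left q a)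
    have hda : d ∣ a := hdvd.trans (Nat.gcd_dvd_right q a)
    have hd0 : 0 < d := Nat.pos_of_dvd_of_pos hdq (by omega)
    refine ⟨⟨hda, ha.ne'⟩, ?_, Nat.div_le_div_right hqN⟩
    exact Nat.div_pos (Nat.le_of_dvd (by omega) hdq) hd0
  · rintro ⟨d, K⟩ hz
    simp only [Finset.mem_sigma, Finset.mem_Icc, Nat.mem_divisors] at hz ⊢
    obtain ⟨⟨hda, _⟩, hK1, hKN⟩ := hz
    have hd0 : 0 < d := Nat.pos_of_dvd_of_pos hda ha
    have hdKN : d * K ≤ N := by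
      rw [mul_comm]; exact (Nat.le_div_iff_mul_le hd0).mp hKN
    refine ⟨⟨Nat.mul_pos hd0 (by omega : 0 < K), hdKN⟩, Nat.dvd_gcd (Dvd.intro K rfl) hda, ?_⟩
    simp [Nat.gcd_eq_zero_iff]; omega
  · rintro ⟨q, d⟩ hz
    simp only [Finset.mem_sigma, Finset.mem_Icc, Nat.mem_divisors] at hz
    obtain ⟨⟨hq1, hqN⟩, hdvd, hg0⟩ := hz
    have hdq : d ∣ q := hdvd.trans (Nat.gcd_dvd_left q a)
    simp [Nat.mul_div_cancel' hdq]
  · rintro ⟨d, K⟩ hz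
    simp only [Finset.mem_sigma, Finset.mem_Icc, Nat.mem_divisors] at hz
    obtain ⟨⟨hda, _⟩, hK1, hKN⟩ := hz
    have hd0 : 0 < d := Nat.pos_of_dvd_of_pos hda ha
    simp [Nat.mul_div_cancel_left _ hd0]
  · rintro ⟨q, d⟩ hz
    simp only [Finset.mem_sigma, Finset.mem_Icc, Nat.mem_divisors] at hz
    obtain ⟨⟨hq1, hqN⟩, hdvd, hg0⟩ := hz
    have hdq : d ∣ q := hdvd.trans (Nat.gcd_dvd_left q a)
    simp only []
    rw [Nat.mul_div_cancel' hdq]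
    ring

lemma LTendsto_comp_div {G : ℕ → ℂ} {d : ℕ} {L : ℂ} (hd : 0 < d) (h : LTendsto G d L) :
    Tendsto (fun x : ℝ => LS G d (x / d)) atTop (nhds L) :=
  h.comp (tendsto_id.atTop_div_const (by positivity : (0:ℝ) < (d:ℝ)))

lemma LTendsto_of_comp_div {G : ℕ → ℂ} {d : ℕ} {L : ℂ} (hd : 0 < d)
    (h : Tendsto (fun x : ℝ => LS G d (x / d)) atTop (nhds L)) : LTendsto G d L := by
  have hd0 : ((d:ℝ)) ≠ 0 := by positivity
  have hcomp : Tendsto (fun y : ℝ => y * d) atTop atTop :=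
    tendsto_id.atTop_mul_const (by positivity : (0:ℝ) < (d:ℝ))
  have := h.comp hcomp
  refine this.congr fun y => ?_
  simp only [Function.comp]
  rw [mul_div_cancel_right₀ y hd0]

lemma LTendsto_eratos (G F : ℕ → ℂ) (hconv : ∀ a : ℕ, 0 < a → RTendsto G a (F a)) :
    ∀ n : ℕ, 0 < n → LTendsto G n (eratos F n / n) := by
  intro n
  induction n using Nat.strong_induction_on with
  | _ n IH =>
  intro hn
  have hne : (n:ℂ) ≠ 0 := by exact_mod_cast hn.ne'
  have hsum : ∀ x : ℝ, (n:ℂ) * LS G n (x / n)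
      = RS G n x - ∑ d ∈ n.divisors.erase n, (d:ℂ) * LS G d (x / d) := by
    intro x
    rw [RS_eq_sum_LS G n hn x,
      ← Finset.add_sum_erase _ _ (Nat.mem_divisors_self n hn.ne')]
    ring
  have h2 : Tendsto (fun x : ℝ => ∑ d ∈ n.divisors.erase n, (d:ℂ) * LS G d (x / d)) atTop
      (nhds (∑ d ∈ n.divisors.erase n, eratos F d)) := by
    apply tendsto_finset_sum
    intro d hd
    have hdn : d ∣ n := Nat.dvd_of_mem_divisors (Finset.mem_of_mem_erase hd)
    have hd0 : 0 < d := Nat.pos_of_dvd_of_pos hdn hn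
    have hlt : d < n :=
      lt_of_le_of_ne (Nat.le_of_dvd hn hdn) (Finset.ne_of_mem_erase hd)
    have hL := LTendsto_comp_div hd0 (IH d hlt hd0)
    have := hL.const_mul (d:ℂ)
    have he : (d:ℂ) * (eratos F d / d) = eratos F d :=
      mul_div_cancel₀ _ (by exact_mod_cast hd0.ne')
    rwa [he] at this
  have hFn : F n - ∑ d ∈ n.divisors.erase n, eratos F d = eratos F n := by
    have h := sum_eratos F n hn
    rw [← Finset.add_sum_erase _ _ (Nat.mem_divisors_self n hn.ne')] at h
    linear_combination -h
  have h3 : Tendsto (fun x : ℝ => (n:ℂ) * LS G n (x / n)) atTop (nhds (eratos F n)) := by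
    rw [← hFn]
    exact ((hconv n hn).sub h2).congr fun x => (hsum x).symm
  apply LTendsto_of_comp_div hn
  have h4 := h3.div_const (n:ℂ)
  refine h4.congr fun x => ?_
  field_simp

end AuxRSLS

noncomputable def TTS (G : ℕ → ℂ) (b p : ℕ) (x : ℝ) : ℂ :=
  ∑ K ∈ (Finset.Icc 1 ⌊x⌋₊).filter (fun K => ¬ p ∣ K), mu K * G (b * K)

section AuxSplit

lemma LS_split (G : ℕ → ℂ) (hG : IsMult G) {p b : ℕ} (hp : p.Prime) (hb : 0 < b)
    (hpb : ¬ p ∣ b) (e : ℕ) (x : ℝ) :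
    LS G (b * p ^ e) x = G (p ^ e) * TTS G b p x - G (p ^ (e + 1)) * TTS G b p (x / p) := by
  set N := ⌊x⌋₊ with hN
  have hsplitG : ∀ j K : ℕ, 0 < K → ¬ p ∣ K → G (b * p ^ j * K) = G (p ^ j) * G (b * K) := by
    intro j K hK0 hpK
    have h1 : b * p ^ j * K = p ^ j * (b * K) := by ring
    rw [h1]
    exact hG _ _ (pow_pos hp.pos j) (Nat.mul_pos hb hK0)
      (Nat.Coprime.pow_left _ ((Nat.Prime.coprime_iff_not_dvd hp).mpr
        (fun h => by rcases (Nat.Prime.dvd_mul hp).mp h with h | h <;> tauto)))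
  rw [LS, ← Finset.sum_filter_add_sum_filter_not (Finset.Icc 1 N) (fun K => ¬ p ∣ K)]
  have hA : ∑ K ∈ (Finset.Icc 1 N).filter (fun K => ¬ p ∣ K), mu K * G (b * p ^ e * K)
      = G (p ^ e) * TTS G b p x := by
    rw [TTS, Finset.mul_sum]
    apply Finset.sum_congr rfl
    intro K hK
    simp only [Finset.mem_filter, Finset.mem_Icc] at hK
    rw [hsplitG e K (by omega) hK.2]
    ring
  have hB : ∑ K ∈ (Finset.Icc 1 N).filter (fun K => ¬ ¬ p ∣ K), mu K * G (b * p ^ e * K)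
      = - (G (p ^ (e + 1)) * TTS G b p (x / p)) := by
    have hp0 : 0 < p := hp.pos
    have hre : ∑ K ∈ (Finset.Icc 1 N).filter (fun K => ¬ ¬ p ∣ K), mu K * G (b * p ^ e * K)
        = ∑ K' ∈ Finset.Icc 1 (N / p), mu (p * K') * G (b * p ^ e * (p * K')) := by
      refine Finset.sum_nbij' (fun K => K / p) (fun K' => p * K') ?_ ?_ ?_ ?_ ?_
      · intro K hK
        simp only [Finset.mem_filter, Finset.mem_Icc, not_not] at hK
        obtain ⟨⟨h1, h2⟩, hpK⟩ := hK
        simp only [Finset.mem_Icc]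
        exact ⟨Nat.div_pos (Nat.le_of_dvd (by omega) hpK) hp0, Nat.div_le_div_right h2⟩
      · intro K' hK'
        simp only [Finset.mem_Icc] at hK'
        simp only [Finset.mem_filter, Finset.mem_Icc, not_not]
        refine ⟨⟨Nat.mul_pos hp0 (by omega), ?_⟩, Dvd.intro K' rfl⟩
        rw [mul_comm]
        exact (Nat.le_div_iff_mul_le hp0).mp hK'.2
      · intro K hK
        simp only [Finset.mem_filter, not_not] at hK
        exact Nat.mul_div_cancel' hK.2
      · intro K' _
        exact Nat.mul_div_cancel_left _ hp0
      · intro K hK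
        simp only [Finset.mem_filter, not_not] at hK
        rw [Nat.mul_div_cancel' hK.2]
    rw [hre, ← Finset.sum_filter_add_sum_filter_not (Finset.Icc 1 (N / p)) (fun K => ¬ p ∣ K)]
    have hzero : ∑ K' ∈ (Finset.Icc 1 (N / p)).filter (fun K => ¬ ¬ p ∣ K),
        mu (p * K') * G (b * p ^ e * (p * K')) = 0 := by
      apply Finset.sum_eq_zero
      intro K' hK'
      simp only [Finset.mem_filter, not_not] at hK'
      rw [mu_mul_prime_sq hp hK'.2, zero_mul]
    have hrest : ∑ K' ∈ (Finset.Icc 1 (N / p)).filter (fun K => ¬ p ∣ K),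
        mu (p * K') * G (b * p ^ e * (p * K'))
        = - (G (p ^ (e + 1)) * TTS G b p (x / p)) := by
      have hfloor : N / p = ⌊x / (p:ℝ)⌋₊ := by
        rw [hN, ← Nat.floor_div_natCast x p]
      rw [TTS, ← hfloor, Finset.mul_sum, ← Finset.sum_neg_distrib]
      apply Finset.sum_congr rfl
      intro K' hK'
      simp only [Finset.mem_filter, Finset.mem_Icc] at hK'
      have harg : b * p ^ e * (p * K') = b * p ^ (e + 1) * K' := by ring
      rw [harg, hsplitG (e + 1) K' (by omega) hK'.2,
        mu_mul_prime hp hK'.2]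
      ring
    rw [hzero, hrest]
    ring
  rw [hA, hB]
  ring

end AuxSplit

section AuxEratosComp

lemma eratos_prime_pow (f : ℕ → ℂ) {p : ℕ} (hp : p.Prime) (E : ℕ) :
    eratos f (p ^ E) = ∑ i ∈ Finset.range (E + 1), f (p ^ i) * mu (p ^ (E - i)) := by
  rw [eratos, Nat.divisors_prime_pow hp, Finset.sum_map]
  apply Finset.sum_congr rfl
  intro i hi
  simp only [Finset.mem_range] at hi
  simp only [Function.Embedding.coeFn_mk]
  rw [Nat.pow_div (by omega) hp.pos]

lemma eratos_one (f : ℕ → ℂ) : eratos f 1 = f 1 := by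
  rw [eratos]
  simp [Nat.divisors_one, mu_one']

lemma canonCoeff_prime_pow (f : ℕ → ℂ) {p : ℕ} (hp : p.Prime) {v : ℕ} (hv : 1 ≤ v) :
    canonCoeff f (p ^ v) = 1 - ∑ K ∈ Finset.range v, eratos f (p ^ K) / ((p:ℂ) ^ K) := by
  rw [canonCoeff, Nat.primeFactors_prime_pow (by omega) hp, Finset.prod_singleton,
    hp.factorization_pow, Finsupp.single_eq_same]

variable (F : ℕ → ℂ) (aF : ℕ) (MF : ℕ → ℂ)
variable {p m b : ℕ}

lemma eratos_F_low (hp : p.Prime) (hb : 0 < b) (hpb : ¬ p ∣ b) (haFfact : aF = p ^ m * b)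
    (hstd0 : ∀ a : ℕ, 0 < a → ¬ aF ∣ a → F a = 0)
    {e : ℕ} (he : e < m) : eratos F (b * p ^ e) = 0 := by
  rw [eratos]
  apply Finset.sum_eq_zero
  intro d hd
  have hd0 : 0 < d := Nat.pos_of_mem_divisors hd
  have hddvd : d ∣ b * p ^ e := Nat.dvd_of_mem_divisors hd
  have : ¬ aF ∣ d := by
    intro hdvd
    have hpm : (p ^ m : ℕ) ∣ b * p ^ e := by
      calc (p ^ m : ℕ) ∣ aF := ⟨b, haFfact⟩
        _ ∣ d := hdvd
        _ ∣ b * p ^ e := hddvd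
    have hcop : Nat.Coprime (p ^ m) b :=
      Nat.Coprime.pow_left _ ((Nat.Prime.coprime_iff_not_dvd hp).mpr hpb)
    have : (p ^ m : ℕ) ∣ p ^ e := (Nat.Coprime.dvd_of_dvd_mul_left hcop hpm)
    have := (Nat.pow_dvd_pow_iff_le_right hp.one_lt).mp this
    omega
  rw [hstd0 d hd0 this, zero_mul]

lemma eratos_F_high (hp : p.Prime) (hb : 0 < b) (hpb : ¬ p ∣ b) (haFfact : aF = p ^ m * b)
    (haF0 : 0 < aF)
    (hstd0 : ∀ a : ℕ, 0 < a → ¬ aF ∣ a → F a = 0)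
    (hstd1 : ∀ a : ℕ, 0 < a → aF ∣ a → F a = F aF * MF (a / aF))
    {e : ℕ} (he : m ≤ e) :
    eratos F (b * p ^ e) = F aF * eratos MF (p ^ (e - m)) := by
  have hbpe : (0:ℕ) < b * p ^ e := Nat.mul_pos hb (pow_pos hp.pos e)
  rw [eratos, ← Finset.sum_filter_of_ne (p := fun d => aF ∣ d)
    (fun d hd hne => by
      by_contra hnd
      exact hne (by rw [hstd0 d (Nat.pos_of_mem_divisors hd) hnd, zero_mul]))]
  have himg : (b * p ^ e).divisors.filter (fun d => aF ∣ d)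
      = (Finset.Icc m e).image (fun δ => b * p ^ δ) := by
    ext d
    simp only [Finset.mem_filter, Nat.mem_divisors, Finset.mem_image, Finset.mem_Icc]
    constructor
    · rintro ⟨⟨hddvd, _⟩, haFd⟩
      have hbaF : b ∣ aF := ⟨p ^ m, by rw [haFfact, mul_comm]⟩
      obtain ⟨q, rfl⟩ := hbaF.trans haFd
      have hq : q ∣ p ^ e := (Nat.mul_dvd_mul_iff_left hb).mp hddvd
      obtain ⟨δ, hδe, rfl⟩ := (Nat.dvd_prime_pow hp).mp hq
      have hpmaF : (p ^ m : ℕ) ∣ aF := ⟨b, haFfact⟩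
      have hpm : (p ^ m : ℕ) ∣ b * p ^ δ := hpmaF.trans haFd
      have hcop : Nat.Coprime (p ^ m) b :=
        Nat.Coprime.pow_left _ ((Nat.Prime.coprime_iff_not_dvd hp).mpr hpb)
      have hd2 : (p ^ m : ℕ) ∣ p ^ δ := hcop.dvd_of_dvd_mul_left hpm
      have hmδ := (Nat.pow_dvd_pow_iff_le_right hp.one_lt).mp hd2
      exact ⟨δ, ⟨hmδ, hδe⟩, rfl⟩
    · rintro ⟨δ, ⟨hmδ, hδe⟩, rfl⟩
      refine ⟨⟨mul_dvd_mul_left b (pow_dvd_pow p hδe), hbpe.ne'⟩, ?_⟩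
      rw [haFfact]
      refine ⟨p ^ (δ - m), ?_⟩
      rw [show p ^ m * b * p ^ (δ - m) = b * (p ^ m * p ^ (δ - m)) from by ring,
        ← pow_add, show m + (δ - m) = δ from by omega]
  rw [himg, Finset.sum_image (fun δ1 h1 δ2 h2 heq => by
    have := Nat.eq_of_mul_eq_mul_left hb heq
    exact Nat.pow_right_injective hp.two_le this)]
  have hterm : ∀ δ ∈ Finset.Icc m e, F (b * p ^ δ) * mu ((b * p ^ e) / (b * p ^ δ))
      = F aF * (MF (p ^ (δ - m)) * mu (p ^ (e - δ))) := by
    intro δ hδ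
    simp only [Finset.mem_Icc] at hδ
    have h1 : b * p ^ δ = aF * p ^ (δ - m) := by
      rw [haFfact, show p ^ m * b * p ^ (δ - m) = b * (p ^ m * p ^ (δ - m)) from by ring,
        ← pow_add, show m + (δ - m) = δ from by omega]
    have h2 : b * p ^ e = (b * p ^ δ) * p ^ (e - δ) := by
      rw [mul_assoc, ← pow_add, show δ + (e - δ) = e by omega]
    have hF : F (b * p ^ δ) = F aF * MF (p ^ (δ - m)) := by
      rw [hstd1 _ (Nat.mul_pos hb (pow_pos hp.pos δ)) ⟨p ^ (δ - m), h1⟩, h1,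
        Nat.mul_div_cancel_left _ haF0]
    rw [hF, h2, Nat.mul_div_cancel_left _ (Nat.mul_pos hb (pow_pos hp.pos δ))]
    ring
  rw [Finset.sum_congr rfl hterm, eratos_prime_pow MF hp (e - m), ← Finset.mul_sum]
  congr 1
  rw [show Finset.Icc m e = Finset.Ico m (e+1) by rw [Finset.Ico_add_one_right_eq_Icc],
    Finset.sum_Ico_eq_sum_range]
  apply Finset.sum_congr (by congr 1; omega)
  intro i hi
  simp only [Finset.mem_range] at hi
  rw [show m + i - m = i from by omega, show e - (m + i) = e - m - i from by omega]

end AuxEratosComp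

section AuxTransp
variable {G : ℕ → ℂ}

lemma cmIndex_eq_top {p : ℕ} (h : ∀ k : ℕ, 1 ≤ k → G (p ^ k) = G p ^ k) :
    cmIndex G p = ⊤ := by
  have hle : ∀ n : ℕ, (n : ℕ∞) ≤ cmIndex G p := by
    intro n
    exact le_iSup₂ (f := fun (w : ℕ) (_ : w ∈ _) => (w : ℕ∞)) n
      (fun k hk _ => h k hk)
  cases hcm : cmIndex G p with
  | top => rfl
  | coe n =>
    have := hle (n + 1)
    rw [hcm, Nat.cast_le] at this
    omega

lemma cmIndex_ne_top {p k0 : ℕ} (hk0 : 1 ≤ k0) (h : G (p ^ k0) ≠ G p ^ k0) :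
    cmIndex G p ≠ ⊤ := by
  have hle : cmIndex G p ≤ (k0 - 1 : ℕ) := by
    apply iSup₂_le
    intro n hn
    have : n ≤ k0 - 1 := by
      by_contra hc
      exact h (hn k0 hk0 (by omega))
    exact_mod_cast this
  intro htop
  rw [htop, top_le_iff] at hle
  exact ENat.coe_ne_top _ hle

lemma trIdx_spec {p : ℕ} (hne : {K : ℕ | G (p ^ (K + 1)) ≠ 1}.Nonempty) :
    ∃ t : ℕ, trIdx G p = (t : ℕ∞) ∧ G (p ^ (t + 1)) ≠ 1 ∧
      ∀ k : ℕ, 1 ≤ k → k ≤ t → G (p ^ k) = 1 := by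
  classical
  obtain ⟨K0, hK0⟩ := hne
  have hex : ∃ K, G (p ^ (K + 1)) ≠ 1 := ⟨K0, hK0⟩
  refine ⟨Nat.find hex, ?_, Nat.find_spec hex, ?_⟩
  · apply le_antisymm
    · exact iInf₂_le (Nat.find hex) (Nat.find_spec hex)
    · apply le_iInf₂
      intro K hK
      exact_mod_cast Nat.find_min' hex hK
  · intro k hk1 hkt
    by_contra hne1
    have := Nat.find_min' hex (m := k - 1) (by rwa [show k - 1 + 1 = k by omega])
    omega

lemma trIdx_nonempty_of_simplyTransparent {p : ℕ} (h : IsSimplyTransparent G p) :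
    {K : ℕ | G (p ^ (K + 1)) ≠ 1}.Nonempty := by
  by_contra hc
  rw [Set.not_nonempty_iff_eq_empty] at hc
  apply h.2.2
  apply cmIndex_eq_top
  intro k hk
  have : G (p ^ ((k - 1) + 1)) = 1 := by
    by_contra hne
    have hmem : (k - 1) ∈ {K : ℕ | G (p ^ (K + 1)) ≠ 1} := hne
    rw [hc] at hmem
    exact hmem
  rw [show k - 1 + 1 = k by omega] at this
  rw [this, h.2.1, one_pow]

lemma G_pow_simplyTransparent (hG1 : G 1 = 1) {q : ℕ} (h : IsSimplyTransparent G q) :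
    G (q ^ (trIdx G q).toNat) = 1 := by
  obtain ⟨t, ht, _, hall⟩ := trIdx_spec (trIdx_nonempty_of_simplyTransparent h)
  rw [ht]
  simp only [ENat.toNat_coe]
  rcases Nat.eq_zero_or_pos t with h0 | h0
  · rw [h0, pow_zero, hG1]
  · exact hall t h0 le_rfl

lemma G_prod_primes_eq_one (hG : IsMult G) (hG1 : G 1 = 1) (f : ℕ → ℕ) :
    ∀ (Φ : Finset ℕ), (∀ q ∈ Φ, q.Prime) → (∀ q ∈ Φ, G (q ^ f q) = 1) →
      G (∏ q ∈ Φ, q ^ f q) = 1 := by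
  classical
  intro Φ
  induction Φ using Finset.induction_on with
  | empty => intro _ _; simpa using hG1
  | @insert a s ha IH =>
    intro hprime hone
    rw [Finset.prod_insert ha]
    have hap : a.Prime := hprime a (Finset.mem_insert_self a s)
    have hcop : Nat.Coprime (a ^ f a) (∏ q ∈ s, q ^ f q) := by
      apply Nat.Coprime.prod_right
      intro q hq
      have hqp : q.Prime := hprime q (Finset.mem_insert_of_mem hq)
      have hne : a ≠ q := fun h => ha (h ▸ hq)
      exact Nat.Coprime.pow (f a) (f q) ((Nat.coprime_primes hap hqp).mpr hne)
    rw [hG _ _ (pow_pos hap.pos _) (Finset.prod_pos fun q hq =>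
        pow_pos (hprime q (Finset.mem_insert_of_mem hq)).pos _) hcop,
      hone a (Finset.mem_insert_self a s),
      IH (fun q hq => hprime q (Finset.mem_insert_of_mem hq))
        (fun q hq => hone q (Finset.mem_insert_of_mem hq)), one_mul]

lemma transpCond_eq_prod (hfin : {p : ℕ | p.Prime ∧ IsBad G p}.Finite) :
    ∃ hS : {p : ℕ | IsSimplyTransparent G p}.Finite,
      transpCond G = ∏ q ∈ hS.toFinset, q ^ (trIdx G q).toNat := by
  have hsub : {p : ℕ | IsSimplyTransparent G p} ⊆ {p : ℕ | p.Prime ∧ IsBad G p} := by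
    intro q hq
    refine ⟨hq.1, ?_, ?_⟩
    · rw [hq.2.1]; simp
    · rw [hq.2.1]
      simp only [norm_one]
      exact_mod_cast hq.1.one_lt.le
  refine ⟨hfin.subset hsub, ?_⟩
  rw [transpCond, finprod_mem_eq_finite_toFinset_prod _ (hfin.subset hsub)]

lemma opacityCore_eq_of_not (hG : IsMult G) (hG1 : G 1 = 1)
    (hfin : {p : ℕ | p.Prime ∧ IsBad G p}.Finite) {p : ℕ} (hp : p.Prime)
    (h : ¬ IsSimplyTransparent G p) : opacityCore G p = G p := by
  obtain ⟨hS, htc⟩ := transpCond_eq_prod hfin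
  have hprimes : ∀ q ∈ hS.toFinset, q.Prime := fun q hq =>
    (hS.mem_toFinset.mp hq).1
  have hones : ∀ q ∈ hS.toFinset, G (q ^ (trIdx G q).toNat) = 1 := fun q hq =>
    G_pow_simplyTransparent hG1 (hS.mem_toFinset.mp hq)
  have hpnot : p ∉ hS.toFinset := fun hc => h (hS.mem_toFinset.mp hc)
  have hcop : Nat.Coprime p (∏ q ∈ hS.toFinset, q ^ (trIdx G q).toNat) := by
    apply Nat.Coprime.prod_right
    intro q hq
    exact (Nat.Coprime.pow_right _
      ((Nat.coprime_primes hp (hprimes q hq)).mpr (fun he => hpnot (he ▸ hq))))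
  rw [opacityCore, mu_prime' hp, htc,
    hG _ _ hp.pos (Finset.prod_pos fun q hq => pow_pos (hprimes q hq).pos _) hcop,
    G_prod_primes_eq_one hG hG1 _ _ hprimes hones]
  ring

lemma opacityCore_eq_of_st (hG : IsMult G) (hG1 : G 1 = 1)
    (hfin : {p : ℕ | p.Prime ∧ IsBad G p}.Finite) {p : ℕ} (hp : p.Prime)
    (h : IsSimplyTransparent G p) :
    opacityCore G p = G (p ^ ((trIdx G p).toNat + 1)) := by
  classical
  obtain ⟨hS, htc⟩ := transpCond_eq_prod hfin
  have hpmem : p ∈ hS.toFinset := hS.mem_toFinset.mpr h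
  have hprimes : ∀ q ∈ hS.toFinset, q.Prime := fun q hq => (hS.mem_toFinset.mp hq).1
  have hones : ∀ q ∈ hS.toFinset, G (q ^ (trIdx G q).toNat) = 1 := fun q hq =>
    G_pow_simplyTransparent hG1 (hS.mem_toFinset.mp hq)
  set t := (trIdx G p).toNat
  have hsplit : p * transpCond G
      = p ^ (t + 1) * ∏ q ∈ hS.toFinset.erase p, q ^ (trIdx G q).toNat := by
    rw [htc, ← Finset.mul_prod_erase _ _ hpmem, pow_succ]
    ring
  have hcop : Nat.Coprime (p ^ (t + 1))
      (∏ q ∈ hS.toFinset.erase p, q ^ (trIdx G q).toNat) := by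
    apply Nat.Coprime.pow_left
    apply Nat.Coprime.prod_right
    intro q hq
    exact Nat.Coprime.pow_right _
      ((Nat.coprime_primes hp (hprimes q (Finset.mem_of_mem_erase hq))).mpr
        (fun he => (Finset.ne_of_mem_erase hq) he.symm))
  rw [opacityCore, mu_prime' hp, hsplit,
    hG _ _ (pow_pos hp.pos _) (Finset.prod_pos fun q hq =>
      pow_pos (hprimes q (Finset.mem_of_mem_erase hq)).pos _) hcop,
    G_prod_primes_eq_one hG hG1 _ _
      (fun q hq => hprimes q (Finset.mem_of_mem_erase hq))
      (fun q hq => hones q (Finset.mem_of_mem_erase hq))]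
  ring

end AuxTransp

section MainCases

variable {G F MF : ℕ → ℂ} {aF : ℕ}

lemma caseT_main (hG : IsMult G) (hG1 : G 1 = 1) (hMF1 : MF 1 = 1)
    (hfin : {p : ℕ | p.Prime ∧ IsBad G p}.Finite)
    (haF : 0 < aF) (hFaF : F aF ≠ 0)
    (hstd0 : ∀ a : ℕ, 0 < a → ¬ aF ∣ a → F a = 0)
    (hstd1 : ∀ a : ℕ, 0 < a → aF ∣ a → F a = F aF * MF (a / aF))
    {p m b : ℕ} (hp : p.Prime) (hb : 0 < b) (hpb : ¬ p ∣ b) (haFfact : aF = p ^ m * b)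
    (hA : ∀ e : ℕ, Tendsto (fun x : ℝ =>
        G (p ^ e) * TTS G b p x - G (p ^ (e + 1)) * TTS G b p (x / p)) atTop
        (nhds (eratos F (b * p ^ e) / ((b * p ^ e : ℕ) : ℂ))))
    {T : ℂ} (hT : Tendsto (fun x : ℝ => TTS G b p x) atTop (nhds T))
    {v : ℕ} (hv : 1 ≤ v) :
    G (p ^ (m + v)) = opacityCore G p + (1 - opacityCore G p) * canonCoeff MF (p ^ v) := by
  have haFC : ((aF : ℕ) : ℂ) ≠ 0 := Nat.cast_ne_zero.mpr haF.ne'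
  have hpC : ∀ j : ℕ, ((p : ℂ)) ^ j ≠ 0 := fun j =>
    pow_ne_zero j (Nat.cast_ne_zero.mpr hp.pos.ne')
  have hTp : Tendsto (fun x : ℝ => TTS G b p (x / (p : ℝ))) atTop (nhds T) :=
    hT.comp (tendsto_id.atTop_div_const (by exact_mod_cast hp.pos : (0:ℝ) < (p:ℝ)))
  have hlim : ∀ e : ℕ, (G (p ^ e) - G (p ^ (e + 1))) * T
      = eratos F (b * p ^ e) / ((b * p ^ e : ℕ) : ℂ) := by
    intro e
    have h1 : Tendsto (fun x : ℝ =>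
        G (p ^ e) * TTS G b p x - G (p ^ (e + 1)) * TTS G b p (x / (p : ℝ))) atTop
        (nhds (G (p ^ e) * T - G (p ^ (e + 1)) * T)) :=
      (hT.const_mul _).sub (hTp.const_mul _)
    have h2 := tendsto_nhds_unique h1 (hA e)
    linear_combination h2
  have hcast : ∀ j : ℕ, ((b * p ^ (m + j) : ℕ) : ℂ) = (aF : ℂ) * (p : ℂ) ^ j := by
    intro j
    have hnat : (b * p ^ (m + j) : ℕ) = aF * p ^ j := by
      rw [haFfact, pow_add]; ring
    rw [hnat]; push_cast; ring
  have hlm0 : (G (p ^ m) - G (p ^ (m + 1))) * T = F aF / (aF : ℂ) := by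
    have h := hlim m
    rw [eratos_F_high F aF MF hp hb hpb haFfact haF hstd0 hstd1 le_rfl,
      Nat.sub_self, pow_zero, eratos_one, hMF1, mul_one] at h
    rw [show (b * p ^ m : ℕ) = aF by rw [haFfact]; ring] at h
    exact h
  have hFdivne : F aF / (aF : ℂ) ≠ 0 := div_ne_zero hFaF haFC
  have hTne : T ≠ 0 := by
    intro h0
    rw [h0, mul_zero] at hlm0
    exact hFdivne hlm0.symm
  have hdne : G (p ^ m) - G (p ^ (m + 1)) ≠ 0 := by
    intro h0
    rw [h0, zero_mul] at hlm0
    exact hFdivne hlm0.symm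
  have hlow : ∀ e : ℕ, e < m → G (p ^ (e + 1)) = G (p ^ e) := by
    intro e he
    have h := hlim e
    rw [eratos_F_low F aF hp hb hpb haFfact hstd0 he, zero_div] at h
    rcases mul_eq_zero.mp h with h' | h'
    · have := sub_eq_zero.mp h'
      exact this.symm
    · exact absurd h' hTne
  have hGm : ∀ e : ℕ, e ≤ m → G (p ^ e) = 1 := by
    intro e
    induction e with
    | zero => intro _; rw [pow_zero]; exact hG1
    | succ k IH =>
      intro hk
      rw [hlow k (by omega), IH (by omega)]
  have hGm1 : G (p ^ m) = 1 := hGm m le_rfl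
  have hGm1ne : G (p ^ (m + 1)) ≠ 1 := by
    intro h1
    apply hdne
    rw [hGm1, h1, sub_self]
  have hstep : ∀ j : ℕ, G (p ^ (m + j)) - G (p ^ (m + (j + 1)))
      = F aF * eratos MF (p ^ j) / ((aF : ℂ) * (p : ℂ) ^ j * T) := by
    intro j
    have h := hlim (m + j)
    rw [eratos_F_high F aF MF hp hb hpb haFfact haF hstd0 hstd1 (Nat.le_add_right m j),
      hcast j, show m + j - m = j from by omega] at h
    rw [eq_div_iff (mul_ne_zero haFC (hpC j))] at h
    rw [show m + (j + 1) = (m + j) + 1 from by omega,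
      eq_div_iff (mul_ne_zero (mul_ne_zero haFC (hpC j)) hTne)]
    linear_combination h
  have h1m : (1 : ℂ) - G (p ^ (m + 1)) = F aF / ((aF : ℂ) * T) := by
    rw [eq_div_iff (mul_ne_zero haFC hTne)]
    rw [eq_div_iff haFC] at hlm0
    linear_combination hlm0 - (aF : ℂ) * T * hGm1
  have hsum : ∑ j ∈ Finset.range v, (G (p ^ (m + j)) - G (p ^ (m + (j + 1))))
      = (1 - G (p ^ (m + 1))) * ∑ K ∈ Finset.range v, eratos MF (p ^ K) / (p : ℂ) ^ K := by
    rw [Finset.mul_sum]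
    refine Finset.sum_congr rfl fun j _ => ?_
    rw [hstep j, h1m, div_mul_div_comm]
    congr 1
    ring
  have htel := sum_range_sub' (fun j => G (p ^ (m + j))) v
  rw [hsum] at htel
  have hm0' : G (p ^ (m + 0)) = 1 := by rw [add_zero]; exact hGm1
  have hH : opacityCore G p = G (p ^ (m + 1)) := by
    by_cases hGp1 : G p = 1
    · have hst : IsSimplyTransparent G p :=
        ⟨hp, hGp1, cmIndex_ne_top (k0 := m + 1) (by omega)
          (by rw [hGp1, one_pow]; exact hGm1ne)⟩
      obtain ⟨t, ht, htne, hall⟩ := trIdx_spec (trIdx_nonempty_of_simplyTransparent hst)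
      have htm : t = m := by
        by_contra hc
        rcases Nat.lt_or_ge t m with h1 | h2
        · exact htne (hGm (t + 1) (by omega))
        · exact hGm1ne (hall (m + 1) (by omega) (by omega))
      rw [opacityCore_eq_of_st hG hG1 hfin hp hst, ht]
      simp only [ENat.toNat_coe]
      rw [htm]
    · have hnst : ¬ IsSimplyTransparent G p := fun h => hGp1 h.2.1
      have hm0 : m = 0 := by
        by_contra h
        apply hGp1
        have := hGm 1 (by omega)
        rwa [pow_one] at this
      rw [opacityCore_eq_of_not hG hG1 hfin hp hnst, hm0, zero_add, pow_one]
  rw [canonCoeff_prime_pow MF hp hv, hH]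
  linear_combination htel + hm0'

lemma caseGeom_main (hG : IsMult G) (hG1 : G 1 = 1) (hMF1 : MF 1 = 1)
    (hfin : {p : ℕ | p.Prime ∧ IsBad G p}.Finite)
    (haF : 0 < aF) (hFaF : F aF ≠ 0)
    (hstd0 : ∀ a : ℕ, 0 < a → ¬ aF ∣ a → F a = 0)
    (hstd1 : ∀ a : ℕ, 0 < a → aF ∣ a → F a = F aF * MF (a / aF))
    {p m b : ℕ} (hp : p.Prime) (hb : 0 < b) (hpb : ¬ p ∣ b) (haFfact : aF = p ^ m * b)
    (hA : ∀ e : ℕ, Tendsto (fun x : ℝ =>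
        G (p ^ e) * TTS G b p x - G (p ^ (e + 1)) * TTS G b p (x / p)) atTop
        (nhds (eratos F (b * p ^ e) / ((b * p ^ e : ℕ) : ℂ))))
    (hgeo : ∀ e : ℕ, G (p ^ (e + 1)) ^ 2 = G (p ^ e) * G (p ^ (e + 2)))
    (hc : G p ≠ 0)
    {v : ℕ} (hv : 1 ≤ v) :
    G (p ^ (m + v)) = opacityCore G p + (1 - opacityCore G p) * canonCoeff MF (p ^ v) := by
  have haFC : ((aF : ℕ) : ℂ) ≠ 0 := Nat.cast_ne_zero.mpr haF.ne'
  have hbC : ((b : ℕ) : ℂ) ≠ 0 := Nat.cast_ne_zero.mpr hb.ne'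
  have hpC : ∀ j : ℕ, ((p : ℂ)) ^ j ≠ 0 := fun j =>
    pow_ne_zero j (Nat.cast_ne_zero.mpr hp.pos.ne')
  have hpow : ∀ e : ℕ, G (p ^ e) = G p ^ e := by
    intro e
    induction e using Nat.twoStepInduction with
    | zero => simpa using hG1
    | one => simp
    | more e IH1 IH2 =>
      have h := hgeo e
      rw [IH1, IH2] at h
      have h2 : (G p) ^ e * G (p ^ (e + 2)) = (G p) ^ e * (G p) ^ (e + 2) := by
        linear_combination -h
      exact mul_left_cancel₀ (pow_ne_zero e hc) h2
  have hl : ∀ e : ℕ, eratos F (b * p ^ e) / ((b * p ^ e : ℕ) : ℂ)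
      = G p ^ e * (eratos F (b * p ^ 0) / ((b * p ^ 0 : ℕ) : ℂ)) := by
    intro e
    have h0 : Tendsto (fun x : ℝ =>
        G p ^ e * (G (p ^ 0) * TTS G b p x - G (p ^ (0 + 1)) * TTS G b p (x / p))) atTop
        (nhds (G p ^ e * (eratos F (b * p ^ 0) / ((b * p ^ 0 : ℕ) : ℂ)))) :=
      (hA 0).const_mul _
    have h1 : Tendsto (fun x : ℝ =>
        G (p ^ e) * TTS G b p x - G (p ^ (e + 1)) * TTS G b p (x / p)) atTop
        (nhds (G p ^ e * (eratos F (b * p ^ 0) / ((b * p ^ 0 : ℕ) : ℂ)))) := by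
      refine h0.congr fun x => ?_
      rw [hpow e, hpow (e + 1), hpow 0, hpow 1]
      ring
    exact tendsto_nhds_unique (hA e) h1
  have hm0 : m = 0 := by
    by_contra hm
    have hlow := eratos_F_low F aF hp hb hpb haFfact hstd0 (show 0 < m by omega)
    have h := hl m
    rw [hlow, zero_div, mul_zero] at h
    rw [eratos_F_high F aF MF hp hb hpb haFfact haF hstd0 hstd1 le_rfl,
      Nat.sub_self, pow_zero, eratos_one, hMF1, mul_one,
      show (b * p ^ m : ℕ) = aF by rw [haFfact]; ring] at h
    exact (div_ne_zero hFaF haFC) h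
  subst hm0
  have hbaF : b = aF := by rw [haFfact, pow_zero, one_mul]
  have hcanon : ∀ K : ℕ, eratos MF (p ^ K) / (p : ℂ) ^ K = G p ^ K := by
    intro K
    have h := hl K
    rw [eratos_F_high F aF MF hp hb hpb haFfact haF hstd0 hstd1 (Nat.zero_le K),
      Nat.sub_zero, eratos_F_high F aF MF hp hb hpb haFfact haF hstd0 hstd1 (Nat.zero_le 0),
      Nat.sub_self, pow_zero, eratos_one, hMF1, mul_one] at h
    have hcast1 : ((b * p ^ K : ℕ) : ℂ) = (b : ℂ) * (p : ℂ) ^ K := by push_cast; ring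
    have hcast0 : ((b * 1 : ℕ) : ℂ) = (b : ℂ) := by push_cast; ring
    rw [hcast1, hcast0] at h
    rw [div_eq_iff (mul_ne_zero hbC (hpC K))] at h
    have hb1 : (F aF / (b:ℂ)) * (b:ℂ) = F aF := div_mul_cancel₀ _ hbC
    have h3 : F aF * eratos MF (p ^ K) = G p ^ K * F aF * (p:ℂ) ^ K := by
      calc F aF * eratos MF (p ^ K) = G p ^ K * (F aF / (b:ℂ)) * ((b:ℂ) * (p:ℂ) ^ K) := h
        _ = G p ^ K * ((F aF / (b:ℂ)) * (b:ℂ)) * (p:ℂ) ^ K := by ring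
        _ = G p ^ K * F aF * (p:ℂ) ^ K := by rw [hb1]
    rw [div_eq_iff (hpC K)]
    exact mul_left_cancel₀ hFaF (by linear_combination h3)
  rw [canonCoeff_prime_pow MF hp hv]
  have hS : ∑ K ∈ Finset.range v, eratos MF (p ^ K) / (p:ℂ) ^ K
      = ∑ K ∈ Finset.range v, G p ^ K :=
    Finset.sum_congr rfl fun K _ => hcanon K
  rw [hS, hpow (0 + v)]
  by_cases hc1 : G p = 1
  · have htop : cmIndex G p = ⊤ := cmIndex_eq_top (fun k _ => hpow k)
    have hnst : ¬ IsSimplyTransparent G p := fun h => h.2.2 htop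
    rw [opacityCore_eq_of_not hG hG1 hfin hp hnst, hc1]
    simp
  · have hnst : ¬ IsSimplyTransparent G p := fun h => hc1 h.2.1
    rw [opacityCore_eq_of_not hG hG1 hfin hp hnst]
    have hgs := geom_sum_mul (G p) v
    rw [zero_add]
    linear_combination -hgs

end MainCases

/-- Explicit recovery of `G ∈ <F>_M` from its opacity core (Proposition 9.6). -/
theorem stmt_6 (F : ℕ → ℂ) (aF : ℕ) (MF : ℕ → ℂ)
    (haF : 0 < aF) (hFaF : F aF ≠ 0)
    (hmin : ∀ a : ℕ, 0 < a → a < aF → F a = 0)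
    (hMF : IsMult MF)
    (hstd : ∀ a : ℕ, 0 < a →
      (aF ∣ a → F a = F aF * MF (a / aF)) ∧ (¬ aF ∣ a → F a = 0))
    (G : ℕ → ℂ) (hG : IsMult G)
    (hfin : {p : ℕ | p.Prime ∧ IsBad G p}.Finite)
    (hconv : ∀ a : ℕ, 0 < a → RTendsto G a (F a)) :
    ∀ p : ℕ, p.Prime → ∀ v : ℕ, 1 ≤ v →
      G (p ^ (aF.factorization p + v)) =
        opacityCore G p + (1 - opacityCore G p) * canonCoeff MF (p ^ v) := by
  intro p hp v hv
  have hG1 : G 1 = 1 := by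
    have hsq := hG 1 1 one_pos one_pos (Nat.coprime_one_left 1)
    rw [mul_one] at hsq
    by_contra hne
    have h0 : G 1 = 0 := by
      rcases mul_eq_zero.mp (show G 1 * (G 1 - 1) = 0 by linear_combination -hsq) with h | h
      · exact h
      · exact absurd (by linear_combination h : G 1 = 1) hne
    have hz : ∀ x : ℝ, RS G aF x = 0 := by
      intro x
      apply Finset.sum_eq_zero
      intro q hq
      have hq1 : 1 ≤ q := (Finset.mem_Icc.mp hq).1
      have hGq : G q = 0 := by
        have h := hG q 1 (by omega) one_pos (Nat.coprime_one_right q)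
        rw [mul_one] at h
        rw [h, h0, mul_zero]
      rw [hGq, zero_mul]
    have h1 := hconv aF haF
    have h2 : Tendsto (fun _ : ℝ => (0 : ℂ)) atTop (nhds (F aF)) := h1.congr hz
    exact hFaF (tendsto_nhds_unique h2 tendsto_const_nhds)
  have hMF1 : MF 1 = 1 := by
    have h := (hstd aF haF).1 dvd_rfl
    rw [Nat.div_self haF] at h
    have h2 : F aF * 1 = F aF * MF 1 := by rw [mul_one]; exact h
    exact (mul_left_cancel₀ hFaF h2).symm
  have hstd0 : ∀ a : ℕ, 0 < a → ¬ aF ∣ a → F a = 0 := fun a ha h => (hstd a ha).2 h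
  have hstd1 : ∀ a : ℕ, 0 < a → aF ∣ a → F a = F aF * MF (a / aF) :=
    fun a ha h => (hstd a ha).1 h
  set m := aF.factorization p with hm
  set b := aF / p ^ m with hbdef
  have haFfact : aF = p ^ m * b := (Nat.ordProj_mul_ordCompl_eq_self aF p).symm
  have hb : 0 < b := Nat.ordCompl_pos p haF.ne'
  have hpb : ¬ p ∣ b := Nat.not_dvd_ordCompl hp haF.ne'
  have hA : ∀ e : ℕ, Tendsto (fun x : ℝ =>
      G (p ^ e) * TTS G b p x - G (p ^ (e + 1)) * TTS G b p (x / p)) atTop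
      (nhds (eratos F (b * p ^ e) / ((b * p ^ e : ℕ) : ℂ))) := by
    intro e
    exact (LTendsto_eratos G F hconv (b * p ^ e)
      (Nat.mul_pos hb (pow_pos hp.pos e))).congr
      (fun x => LS_split G hG hp hb hpb e x)
  by_cases hgeom : ∀ e : ℕ, G (p ^ (e + 1)) ^ 2 = G (p ^ e) * G (p ^ (e + 2))
  · by_cases hc : G p = 0
    · have hT : Tendsto (fun x : ℝ => TTS G b p x) atTop
          (nhds (eratos F (b * p ^ 0) / ((b * p ^ 0 : ℕ) : ℂ))) := by
        refine (hA 0).congr fun x => ?_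
        rw [pow_zero, hG1, pow_one, hc]
        ring
      exact caseT_main hG hG1 hMF1 hfin haF hFaF hstd0 hstd1 hp hb hpb haFfact hA hT hv
    · exact caseGeom_main hG hG1 hMF1 hfin haF hFaF hstd0 hstd1 hp hb hpb haFfact hA
        hgeom hc hv
  · push_neg at hgeom
    obtain ⟨e0, he0⟩ := hgeom
    have hD : G (p ^ (e0 + 1)) ^ 2 - G (p ^ e0) * G (p ^ (e0 + 2)) ≠ 0 :=
      sub_ne_zero.mpr he0
    set D := G (p ^ (e0 + 1)) ^ 2 - G (p ^ e0) * G (p ^ (e0 + 2)) with hDdef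
    set L2 := G (p ^ (e0 + 1)) * (eratos F (b * p ^ e0) / ((b * p ^ e0 : ℕ) : ℂ))
      - G (p ^ e0) * (eratos F (b * p ^ (e0 + 1)) / ((b * p ^ (e0 + 1) : ℕ) : ℂ)) with hL2def
    have hcombo : Tendsto (fun x : ℝ => -D * TTS G b p (x / (p : ℝ))) atTop (nhds L2) := by
      have h1 := ((hA e0).const_mul (G (p ^ (e0 + 1)))).sub ((hA (e0 + 1)).const_mul (G (p ^ e0)))
      refine h1.congr fun x => ?_
      rw [hDdef, show e0 + 1 + 1 = e0 + 2 from by omega]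
      ring
    have hTp : Tendsto (fun x : ℝ => TTS G b p (x / (p : ℝ))) atTop (nhds ((-D)⁻¹ * L2)) := by
      have h2 := hcombo.const_mul (-D)⁻¹
      refine h2.congr fun x => ?_
      rw [inv_mul_cancel_left₀ (neg_ne_zero.mpr hD)]
    have hT : Tendsto (fun x : ℝ => TTS G b p x) atTop (nhds ((-D)⁻¹ * L2)) := by
      have hcomp : Tendsto (fun y : ℝ => y * (p : ℝ)) atTop atTop :=
        tendsto_id.atTop_mul_const (by exact_mod_cast hp.pos : (0:ℝ) < (p:ℝ))
      have h3 := hTp.comp hcomp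
      refine h3.congr fun y => ?_
      simp only [Function.comp]
      rw [mul_div_cancel_right₀ y (by exact_mod_cast hp.pos.ne' : (p:ℝ) ≠ 0)]
    exact caseT_main hG hG1 hMF1 hfin haF hFaF hstd0 hstd1 hp hb hpb haFfact hA hT hv
end

section
/- Let F : ℕ → ℂ be not identically zero, and set F' := F ∗ μ. There exists a completely multiplicative function G : ℕ → ℂ such that R_G(a) converges with R_G(a) = F(a) for every a ∈ ℕ, if and only if F(1) ≠ 0, the function q ↦ F'(q)/F(1) is completely multiplicative, and the series Σ_{q=1}^∞ (F'(q)/q)·μ(q) converges to F(1)². In that case such G is unique and is given by G(q) = F'(q)/(q·F(1)) for all q ∈ ℕ. -/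
open Filter Finset

section Helpers

open ArithmeticFunction

noncomputable def Tpart (G : ℕ → ℂ) (n : ℕ) : ℂ := ∑ m ∈ Finset.Icc 1 n, G m * mu m

lemma cR_one (q : ℕ) : cR q 1 = mu q := by
  simp [cR, Nat.gcd_one_right, Nat.divisors_one]

lemma RS_one (G : ℕ → ℂ) (x : ℝ) : RS G 1 x = Tpart G ⌊x⌋₊ := by
  simp only [RS, Tpart, cR_one]

lemma RS_eq (G : ℕ → ℂ) (hG : IsCM G) (a : ℕ) (ha : 0 < a) (n : ℕ) :
    (∑ q ∈ Finset.Icc 1 n, G q * cR q a)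
      = ∑ d ∈ a.divisors, (d : ℂ) * G d * Tpart G (n / d) := by
  have h1 : ∀ q ∈ Finset.Icc 1 n, G q * cR q a
      = ∑ d ∈ a.divisors.filter (· ∣ q), G q * ((d : ℂ) * mu (q / d)) := by
    intro q hq
    have hq1 : 1 ≤ q := (Finset.mem_Icc.mp hq).1
    have hset : (Nat.gcd q a).divisors = a.divisors.filter (· ∣ q) := by
      ext d
      simp only [Nat.mem_divisors, Finset.mem_filter, Nat.dvd_gcd_iff]
      constructor
      · rintro ⟨⟨h1, h2⟩, _⟩; exact ⟨⟨h2, ha.ne'⟩, h1⟩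
      · rintro ⟨⟨h2, _⟩, h1⟩
        exact ⟨⟨h1, h2⟩, Nat.gcd_ne_zero_left (by omega)⟩
    rw [cR, hset, Finset.mul_sum]
  rw [Finset.sum_congr rfl h1]
  rw [Finset.sum_comm' (s := Finset.Icc 1 n) (t := fun q => a.divisors.filter (· ∣ q))
      (t' := a.divisors) (s' := fun d => (Finset.Icc 1 n).filter (d ∣ ·))
      (by intro q d; simp only [Finset.mem_filter]; tauto)]
  refine Finset.sum_congr rfl fun d hd => ?_
  have hd0 : 0 < d := Nat.pos_of_mem_divisors hd
  rw [Tpart, Finset.mul_sum]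
  refine Finset.sum_nbij' (fun q => q / d) (fun m => d * m) ?_ ?_ ?_ ?_ ?_
  · intro q hqf
    obtain ⟨hq, hdvd⟩ := Finset.mem_filter.mp hqf
    obtain ⟨hq1, hqn⟩ := Finset.mem_Icc.mp hq
    refine Finset.mem_Icc.mpr ⟨(Nat.one_le_div_iff hd0).mpr (Nat.le_of_dvd (by omega) hdvd),
      Nat.div_le_div_right hqn⟩
  · intro m hm
    obtain ⟨hm1, hm2⟩ := Finset.mem_Icc.mp hm
    refine Finset.mem_filter.mpr ⟨Finset.mem_Icc.mpr ⟨Nat.mul_pos hd0 hm1, ?_⟩, dvd_mul_right d m⟩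
    calc d * m = m * d := by ring
    _ ≤ n := (Nat.le_div_iff_mul_le hd0).mp hm2
  · intro q hqf
    exact Nat.mul_div_cancel' (Finset.mem_filter.mp hqf).2
  · intro m _
    exact Nat.mul_div_cancel_left m hd0
  · intro q hqf
    obtain ⟨hq, hdvd⟩ := Finset.mem_filter.mp hqf
    obtain ⟨hq1, hqn⟩ := Finset.mem_Icc.mp hq
    have hm1 : 1 ≤ q / d := (Nat.one_le_div_iff hd0).mpr (Nat.le_of_dvd (by omega) hdvd)
    have hGq : G q = G d * G (q / d) := by
      conv_lhs => rw [← Nat.mul_div_cancel' hdvd]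
      exact hG d (q / d) hd0 (by omega)
    rw [hGq]; ring

lemma tendsto_div_nat (d : ℕ) (hd : 0 < d) :
    Filter.Tendsto (fun n : ℕ => n / d) Filter.atTop Filter.atTop :=
  Filter.tendsto_atTop_atTop.2 fun b => ⟨b * d, fun n hn => (Nat.le_div_iff_mul_le hd).2 hn⟩

lemma tendsto_RS_of (G : ℕ → ℂ) (hG : IsCM G) {S : ℂ}
    (hT : Tendsto (Tpart G) atTop (nhds S)) (a : ℕ) (ha : 0 < a) :
    RTendsto G a ((∑ d ∈ a.divisors, (d : ℂ) * G d) * S) := by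
  have key : (fun x : ℝ => RS G a x)
      = fun x : ℝ => ∑ d ∈ a.divisors, (d : ℂ) * G d * Tpart G (⌊x⌋₊ / d) :=
    funext fun x => RS_eq G hG a ha ⌊x⌋₊
  show Tendsto (fun x : ℝ => RS G a x) atTop _
  rw [key, Finset.sum_mul]
  refine tendsto_finset_sum _ fun d hd => ?_
  have hd0 : 0 < d := Nat.pos_of_mem_divisors hd
  exact Tendsto.const_mul _
    (hT.comp ((tendsto_div_nat d hd0).comp tendsto_nat_floor_atTop))

lemma tendsto_nat_of_real {f : ℕ → ℂ} {S : ℂ}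
    (h : Tendsto (fun x : ℝ => f ⌊x⌋₊) atTop (nhds S)) :
    Tendsto f atTop (nhds S) := by
  have := h.comp (tendsto_natCast_atTop_atTop (R := ℝ))
  simpa [Function.comp_def] using this

lemma moebius_inv₁ {f g : ℕ → ℂ} (h : ∀ n, 0 < n → ∑ d ∈ n.divisors, f d = g n) :
    ∀ n, 0 < n → ∑ d ∈ n.divisors, g d * mu (n / d) = f n := by
  intro n hn
  have h2 := (ArithmeticFunction.sum_eq_iff_sum_mul_moebius_eq (f := f) (g := g)).mp
    (fun m hm => h m hm) n hn
  rw [Nat.sum_divisorsAntidiagonal'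
    (f := fun i j => ((ArithmeticFunction.moebius i : ℤ) : ℂ) * g j)] at h2
  rw [← h2]
  exact Finset.sum_congr rfl fun d hd => by rw [mu]; ring

lemma moebius_inv₂ {f g : ℕ → ℂ} (h : ∀ n, 0 < n → ∑ d ∈ n.divisors, g d * mu (n / d) = f n) :
    ∀ n, 0 < n → ∑ d ∈ n.divisors, f d = g n := by
  refine (ArithmeticFunction.sum_eq_iff_sum_mul_moebius_eq (f := f) (g := g)).mpr ?_
  intro n hn
  rw [Nat.sum_divisorsAntidiagonal'
    (f := fun i j => ((ArithmeticFunction.moebius i : ℤ) : ℂ) * g j)]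
  rw [← h n hn]
  exact Finset.sum_congr rfl fun d hd => by rw [mu]; ring

lemma forward_master (F G : ℕ → ℂ) (hG : IsCM G)
    (hR : ∀ a : ℕ, 0 < a → RTendsto G a (F a)) (hF : ∃ a : ℕ, 0 < a ∧ F a ≠ 0) :
    F 1 ≠ 0 ∧ Tendsto (Tpart G) atTop (nhds (F 1)) ∧
      ∀ q : ℕ, 0 < q → eratos F q = (q : ℂ) * G q * F 1 := by
  have hT : Tendsto (Tpart G) atTop (nhds (F 1)) := by
    have h1 : Tendsto (fun x : ℝ => RS G 1 x) atTop (nhds (F 1)) := hR 1 one_pos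
    rw [show (fun x : ℝ => RS G 1 x) = fun x : ℝ => Tpart G ⌊x⌋₊ from funext (RS_one G)] at h1
    exact tendsto_nat_of_real h1
  have hFa : ∀ a, 0 < a → F a = (∑ d ∈ a.divisors, (d : ℂ) * G d) * F 1 := fun a ha =>
    tendsto_nhds_unique (hR a ha) (tendsto_RS_of G hG hT a ha)
  have hF1 : F 1 ≠ 0 := by
    obtain ⟨a, ha, hne⟩ := hF
    intro h0; exact hne (by rw [hFa a ha, h0, mul_zero])
  refine ⟨hF1, hT, ?_⟩
  have h := moebius_inv₁ (f := fun d => (d : ℂ) * G d * F 1) (g := F)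
    (fun n hn => by rw [hFa n hn, Finset.sum_mul])
  intro q hq
  rw [eratos, h q hq]

end Helpers

/-- Completely multiplicative Ramanujan clouds (Theorem 4.2). -/
theorem stmt_9 (F : ℕ → ℂ) (hF : ∃ a : ℕ, 0 < a ∧ F a ≠ 0) :
    ((∃ G : ℕ → ℂ, IsCM G ∧ ∀ a : ℕ, 0 < a → RTendsto G a (F a)) ↔
      (F 1 ≠ 0 ∧ IsCM (fun q => eratos F q / F 1) ∧
        Tendsto (fun x : ℝ => ∑ q ∈ Finset.Icc 1 ⌊x⌋₊, (eratos F q / q) * mu q)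
          atTop (nhds (F 1 ^ 2)))) ∧
    (∀ G : ℕ → ℂ, IsCM G → (∀ a : ℕ, 0 < a → RTendsto G a (F a)) →
      ∀ q : ℕ, 0 < q → G q = eratos F q / (q * F 1)) := by
  constructor
  · constructor
    · rintro ⟨G, hG, hR⟩
      obtain ⟨hF1, hT, herat⟩ := forward_master F G hG hR hF
      refine ⟨hF1, ?_, ?_⟩
      · intro a b ha hb
        have hab := herat (a * b) (Nat.mul_pos ha hb)
        have hGa := herat a ha
        have hGb := herat b hb
        have hGm := hG a b ha hb
        simp only
        rw [hab, hGa, hGb, hGm]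
        push_cast
        field_simp
      · have hfun : (fun x : ℝ => ∑ q ∈ Finset.Icc 1 ⌊x⌋₊, (eratos F q / q) * mu q)
            = fun x : ℝ => F 1 * Tpart G ⌊x⌋₊ := by
          funext x
          rw [Tpart, Finset.mul_sum]
          refine Finset.sum_congr rfl fun q hq => ?_
          have hq0 : 0 < q := (Finset.mem_Icc.mp hq).1
          have hqc : (q : ℂ) ≠ 0 := Nat.cast_ne_zero.mpr hq0.ne'
          rw [herat q hq0]
          field_simp
        rw [hfun]
        have h2 := Tendsto.const_mul (F 1) (hT.comp (tendsto_nat_floor_atTop (α := ℝ)))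
        rw [show F 1 ^ 2 = F 1 * F 1 by ring]
        exact h2
    · rintro ⟨hF1, hcm, hsum⟩
      set G : ℕ → ℂ := fun q => eratos F q / ((q : ℂ) * F 1) with hGdef
      have hGval : ∀ q : ℕ, G q = eratos F q / ((q : ℂ) * F 1) := fun q => rfl
      have hGcm : IsCM G := by
        intro a b ha hb
        have h := hcm a b ha hb
        simp only at h
        have hac : (a : ℂ) ≠ 0 := Nat.cast_ne_zero.mpr ha.ne'
        have hbc : (b : ℂ) ≠ 0 := Nat.cast_ne_zero.mpr hb.ne'
        rw [hGval, hGval, hGval]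
        push_cast
        rw [div_mul_div_comm, div_eq_div_iff (mul_ne_zero (mul_ne_zero hac hbc) hF1)
          (mul_ne_zero (mul_ne_zero hac hF1) (mul_ne_zero hbc hF1))]
        field_simp at h
        linear_combination ((a : ℂ) * b * F 1) * h
      have hT : Tendsto (Tpart G) atTop (nhds (F 1)) := by
        have h1 : (fun x : ℝ => Tpart G ⌊x⌋₊)
            = fun x : ℝ => (F 1)⁻¹ * ∑ q ∈ Finset.Icc 1 ⌊x⌋₊, (eratos F q / q) * mu q := by
          funext x
          rw [Tpart, Finset.mul_sum]
          refine Finset.sum_congr rfl fun q hq => ?_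
          have hq0 : 0 < q := (Finset.mem_Icc.mp hq).1
          have hqc : (q : ℂ) ≠ 0 := Nat.cast_ne_zero.mpr hq0.ne'
          rw [hGval]
          ring
        apply tendsto_nat_of_real
        rw [h1]
        have h3 := Tendsto.const_mul (F 1)⁻¹ hsum
        rw [show (F 1)⁻¹ * F 1 ^ 2 = F 1 by field_simp] at h3
        exact h3
      refine ⟨G, hGcm, fun a ha => ?_⟩
      have hto := tendsto_RS_of G hGcm hT a ha
      have hDa : (∑ d ∈ a.divisors, (d : ℂ) * G d) * F 1 = F a := by
        have hsumd : ∑ d ∈ a.divisors, (d : ℂ) * G d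
            = (∑ d ∈ a.divisors, eratos F d) / F 1 := by
          rw [Finset.sum_div]
          refine Finset.sum_congr rfl fun d hd => ?_
          have hd0 : 0 < d := Nat.pos_of_mem_divisors hd
          have hdc : (d : ℂ) ≠ 0 := Nat.cast_ne_zero.mpr hd0.ne'
          rw [hGval]
          field_simp
        have hinv := moebius_inv₂ (f := eratos F) (g := F) (fun n _ => rfl) a ha
        rw [hsumd, hinv]
        field_simp
      rwa [hDa] at hto
  · intro G hG hR q hq
    obtain ⟨hF1, hT, herat⟩ := forward_master F G hG hR hF
    have hqc : (q : ℂ) ≠ 0 := Nat.cast_ne_zero.mpr hq.ne'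
    rw [herat q hq]
    field_simp
end

section
/- Let G : ℕ → ℂ be multiplicative such that the coprime series S_G(a) converges for every a ∈ ℕ and S_G(1) ≠ 0. Then: (i) G(p) ≠ 1 for every prime p; (ii) S_G(a) = ( ∏_{p ∣ a} (1 − G(p))^{-1} ) · S_G(1) for every a ∈ ℕ; (iii) G(p) = 1 − S_G(1)/S_G(p) for every prime p; (iv) S_G(a) ≠ 0 for every a ∈ ℕ. -/
open Filter Finset

lemma SS_split (G : ℕ → ℂ) (hG : IsMult G) {p a : ℕ} (hp : p.Prime) (hpa : ¬ p ∣ a)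
    (x : ℝ) : SS G a x = SS G (a * p) x - G p * SS G (a * p) (x / p) := by
  have hp0 : 0 < p := hp.pos
  have hm : ⌊x / (p : ℝ)⌋₊ = ⌊x⌋₊ / p := Nat.floor_div_natCast x p
  unfold SS
  rw [hm]
  set n := ⌊x⌋₊ with hn
  -- split the sum over the coprimality with p
  rw [← Finset.sum_filter_add_sum_filter_not ((Finset.Icc 1 n).filter fun r => Nat.gcd r a = 1)
    (fun r => p ∣ r) (fun r => G r * mu r)]
  have hset1 : (((Finset.Icc 1 n).filter fun r => Nat.gcd r a = 1).filter fun r => ¬ p ∣ r)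
      = (Finset.Icc 1 n).filter fun r => Nat.gcd r (a * p) = 1 := by
    ext r
    simp only [Finset.mem_filter, Finset.mem_Icc, and_assoc]
    constructor
    · rintro ⟨h1, h2, h3, h4⟩
      refine ⟨h1, h2, ?_⟩
      exact Nat.Coprime.mul_right h3 ((Nat.coprime_comm.mpr (hp.coprime_iff_not_dvd.mpr h4)))
    · rintro ⟨h1, h2, h3⟩
      have h3' : Nat.Coprime r a ∧ Nat.Coprime r p := Nat.coprime_mul_iff_right.mp h3
      exact ⟨h1, h2, h3'.1, fun hd => hp.coprime_iff_not_dvd.mp (Nat.coprime_comm.mp h3'.2) hd⟩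
  have hreindex : (∑ r ∈ ((Finset.Icc 1 n).filter fun r => Nat.gcd r a = 1).filter
        (fun r => p ∣ r), G r * mu r)
      = ∑ s ∈ (Finset.Icc 1 (n / p)).filter fun s => Nat.gcd (p * s) a = 1,
          G (p * s) * mu (p * s) := by
    refine Finset.sum_nbij' (fun r => r / p) (fun s => p * s) ?_ ?_ ?_ ?_ ?_
    · intro r hr
      simp only [Finset.mem_filter, Finset.mem_Icc] at hr ⊢
      obtain ⟨⟨⟨h1, h2⟩, h3⟩, h4⟩ := hr
      refine ⟨⟨(Nat.one_le_div_iff hp0).mpr (Nat.le_of_dvd h1 h4),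
        Nat.div_le_div_right h2⟩, ?_⟩
      rwa [Nat.mul_div_cancel' h4]
    · intro s hs
      simp only [Finset.mem_filter, Finset.mem_Icc] at hs ⊢
      obtain ⟨⟨h1, h2⟩, h3⟩ := hs
      refine ⟨⟨⟨Nat.one_le_iff_ne_zero.mpr (by positivity), ?_⟩, h3⟩, Dvd.intro s rfl⟩
      calc p * s = s * p := mul_comm _ _
        _ ≤ n := (Nat.le_div_iff_mul_le hp0).mp h2
    · intro r hr
      simp only [Finset.mem_filter] at hr
      exact Nat.mul_div_cancel' hr.2
    · intro s _
      exact Nat.mul_div_cancel_left _ hp0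
    · intro r hr
      simp only [Finset.mem_filter] at hr
      rw [Nat.mul_div_cancel' hr.2]
  rw [hset1, hreindex]
  -- now split the reindexed sum according to whether p ∣ s
  rw [← Finset.sum_filter_add_sum_filter_not
    ((Finset.Icc 1 (n / p)).filter fun s => Nat.gcd (p * s) a = 1)
    (fun s => p ∣ s) (fun s => G (p * s) * mu (p * s))]
  have hzero : (∑ s ∈ (((Finset.Icc 1 (n / p)).filter fun s => Nat.gcd (p * s) a = 1).filter
      fun s => p ∣ s), G (p * s) * mu (p * s)) = 0 := by
    refine Finset.sum_eq_zero fun s hs => ?_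
    simp only [Finset.mem_filter] at hs
    have : ¬ Squarefree (p * s) := by
      intro hsq
      exact hp.one_lt.ne' (Nat.isUnit_iff.mp (hsq p (mul_dvd_mul_left p hs.2)))
    rw [mu, ArithmeticFunction.moebius_eq_zero_of_not_squarefree this]
    simp
  have hset2 : ((((Finset.Icc 1 (n / p)).filter fun s => Nat.gcd (p * s) a = 1).filter
      fun s => ¬ p ∣ s)) = (Finset.Icc 1 (n / p)).filter fun s => Nat.gcd s (a * p) = 1 := by
    ext s
    simp only [Finset.mem_filter, and_assoc]
    constructor
    · rintro ⟨h1, h2, h3⟩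
      have h2' : Nat.Coprime p a ∧ Nat.Coprime s a := Nat.coprime_mul_iff_left.mp h2
      exact ⟨h1, Nat.Coprime.mul_right h2'.2 (Nat.coprime_comm.mpr (hp.coprime_iff_not_dvd.mpr h3))⟩
    · rintro ⟨h1, h2⟩
      have h2' : Nat.Coprime s a ∧ Nat.Coprime s p := Nat.coprime_mul_iff_right.mp h2
      refine ⟨h1, Nat.coprime_mul_iff_left.mpr ⟨hp.coprime_iff_not_dvd.mpr hpa, h2'.1⟩,
        fun hd => hp.coprime_iff_not_dvd.mp (Nat.coprime_comm.mp h2'.2) hd⟩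
  rw [hzero, hset2, zero_add]
  have hterm : ∀ s ∈ (Finset.Icc 1 (n / p)).filter fun s => Nat.gcd s (a * p) = 1,
      G (p * s) * mu (p * s) = -(G p * (G s * mu s)) := by
    intro s hs
    simp only [Finset.mem_filter, Finset.mem_Icc] at hs
    have hsp : Nat.Coprime p s := by
      have := (Nat.coprime_mul_iff_right.mp hs.2).2
      exact Nat.coprime_comm.mp this
    have hmu : mu (p * s) = mu p * mu s := by
      unfold mu
      rw [← Int.cast_mul]
      congr 1
      exact_mod_cast ArithmeticFunction.isMultiplicative_moebius.map_mul_of_coprime hsp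
    have hmup : mu p = -1 := by
      unfold mu; rw [ArithmeticFunction.moebius_apply_prime hp]; simp
    rw [hG p s hp0 hs.1.1 hsp, hmu, hmup]
    ring
  rw [Finset.sum_congr rfl hterm, Finset.sum_neg_distrib, ← Finset.mul_sum]
  ring

lemma S_rec (G : ℕ → ℂ) (hG : IsMult G) (S : ℕ → ℂ)
    (hS : ∀ a : ℕ, 0 < a → STendsto G a (S a)) {p a : ℕ} (hp : p.Prime) (ha : 0 < a)
    (hpa : ¬ p ∣ a) : S a = (1 - G p) * S (a * p) := by
  have hap : 0 < a * p := Nat.mul_pos ha hp.pos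
  have hdiv : Tendsto (fun x : ℝ => x / (p : ℝ)) atTop atTop :=
    tendsto_id.atTop_div_const (by exact_mod_cast hp.pos)
  have h2 : Tendsto (fun x : ℝ => SS G (a * p) x - G p * SS G (a * p) (x / p)) atTop
      (nhds (S (a * p) - G p * S (a * p))) :=
    (hS (a * p) hap).sub (((hS (a * p) hap).comp hdiv).const_mul _)
  have h1 : Tendsto (fun x : ℝ => SS G (a * p) x - G p * SS G (a * p) (x / p)) atTop
      (nhds (S a)) := (hS a ha).congr (fun x => SS_split G hG hp hpa x)
  have := tendsto_nhds_unique h1 h2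
  rw [this]; ring

lemma S_congr (G : ℕ → ℂ) (S : ℕ → ℂ)
    (hS : ∀ a : ℕ, 0 < a → STendsto G a (S a)) {a b : ℕ} (ha : 0 < a) (hb : 0 < b)
    (hab : a.primeFactors = b.primeFactors) : S a = S b := by
  have key : ∀ x : ℝ, SS G a x = SS G b x := by
    intro x
    unfold SS
    apply Finset.sum_congr _ (fun _ _ => rfl)
    ext r
    simp only [Finset.mem_filter, Finset.mem_Icc, and_congr_right_iff]
    rintro ⟨h1, _⟩
    have hr : r ≠ 0 := by omega
    rw [show (Nat.gcd r a = 1) = Nat.Coprime r a from rfl,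
      show (Nat.gcd r b = 1) = Nat.Coprime r b from rfl,
      ← Nat.disjoint_primeFactors hr ha.ne', ← Nat.disjoint_primeFactors hr hb.ne', hab]
  exact tendsto_nhds_unique ((hS a ha).congr key) (hS b hb)

/-- Coprime series with separating multiplicative coefficients (Lemma 5.3). -/
theorem stmt_10 (G : ℕ → ℂ) (hG : IsMult G) (S : ℕ → ℂ)
    (hS : ∀ a : ℕ, 0 < a → STendsto G a (S a)) (hS1 : S 1 ≠ 0) :
    (∀ p : ℕ, p.Prime → G p ≠ 1) ∧
    (∀ a : ℕ, 0 < a → S a = (∏ p ∈ a.primeFactors, (1 - G p)⁻¹) * S 1) ∧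
    (∀ p : ℕ, p.Prime → G p = 1 - S 1 / S p) ∧
    (∀ a : ℕ, 0 < a → S a ≠ 0) := by
  have hne : ∀ p : ℕ, p.Prime → G p ≠ 1 := by
    intro p hp hGp
    have h := S_rec G hG S hS hp one_pos (fun hd => hp.ne_one (Nat.dvd_one.mp hd))
    rw [one_mul, hGp] at h
    simp only [sub_self, zero_mul] at h
    exact hS1 h
  have hS1rec : ∀ p : ℕ, p.Prime → S 1 = (1 - G p) * S p := by
    intro p hp
    have h := S_rec G hG S hS hp one_pos (fun hd => hp.ne_one (Nat.dvd_one.mp hd))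
    rwa [one_mul] at h
  have hprod : ∀ a : ℕ, 0 < a → S a = (∏ p ∈ a.primeFactors, (1 - G p)⁻¹) * S 1 := by
    intro a
    induction a using Nat.strong_induction_on with
    | _ a ih =>
      intro ha
      by_cases h1 : a = 1
      · subst h1; simp
      · set p := a.minFac with hpdef
        have hp : p.Prime := Nat.minFac_prime h1
        have hpd : p ∣ a := Nat.minFac_dvd a
        set k := a.factorization p with hk
        have hk1 : k ≠ 0 := (hp.factorization_pos_of_dvd ha.ne' hpd).ne'
        set b := a / p ^ k with hbdef
        have hab : p ^ k * b = a := Nat.ordProj_mul_ordCompl_eq_self a p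
        have hb0 : 0 < b := by
          rcases Nat.eq_zero_or_pos b with h | h
          · rw [h, mul_zero] at hab; omega
          · exact h
        have hpb : ¬ p ∣ b := Nat.not_dvd_ordCompl hp ha.ne'
        have hba : b < a := by
          have h2 : 1 * b < p ^ k * b :=
            (Nat.mul_lt_mul_right hb0).mpr (Nat.one_lt_pow hk1 hp.one_lt)
          rw [one_mul, hab] at h2
          exact h2
        have hfac : a.primeFactors = insert p b.primeFactors := by
          rw [← hab, Nat.primeFactors_mul (pow_ne_zero _ hp.pos.ne') hb0.ne',
            Nat.primeFactors_prime_pow hk1 hp, ← Finset.insert_eq]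
        have hfacbp : (b * p).primeFactors = a.primeFactors := by
          rw [Nat.primeFactors_mul hb0.ne' hp.pos.ne', hp.primeFactors, hfac,
            Finset.union_comm, ← Finset.insert_eq]
        have hSa : S a = S (b * p) :=
          S_congr G S hS ha (Nat.mul_pos hb0 hp.pos) hfacbp.symm
        have hrec : S b = (1 - G p) * S (b * p) := S_rec G hG S hS hp hb0 hpb
        have hGp1 : (1 - G p) ≠ 0 := sub_ne_zero.mpr (Ne.symm (hne p hp))
        have hpnotmem : p ∉ b.primeFactors := fun hmem =>
          hpb (Nat.dvd_of_mem_primeFactors hmem)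
        rw [hSa, hfac, Finset.prod_insert hpnotmem]
        have hbp : S (b * p) = (1 - G p)⁻¹ * S b := by
          rw [hrec]; field_simp
        rw [hbp, ih b hba hb0]; ring
  have hnz : ∀ a : ℕ, 0 < a → S a ≠ 0 := by
    intro a ha
    rw [hprod a ha]
    refine mul_ne_zero (Finset.prod_ne_zero_iff.mpr fun p hpmem => ?_) hS1
    exact inv_ne_zero (sub_ne_zero.mpr (Ne.symm (hne p (Nat.prime_of_mem_primeFactors hpmem))))
  refine ⟨hne, hprod, fun p hp => ?_, hnz⟩
  have h := hS1rec p hp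
  have hSp := hnz p hp.pos
  field_simp
  rw [h]; ring
end

section
/- Let G : ℕ → ℂ be multiplicative and let b, c ∈ ℕ with gcd(b,c) = 1. Then S_G(b,x) = Σ_{d ∣ c} G(d)·μ(d)·S_G(bc, x/d) for every real x ≥ 0. Consequently, if S_G(bc) converges, then S_G(b) converges and S_G(b) = C_G(c)·S_G(bc) = ( ∏_{p ∣ c} (1 − G(p)) ) · S_G(bc). -/
open Filter Finset

lemma mu_mul {d m : ℕ} (h : Nat.Coprime d m) : mu (d * m) = mu d * mu m := by
  unfold mu
  rw [ArithmeticFunction.isMultiplicative_moebius.map_mul_of_coprime h]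
  push_cast; ring

lemma mu_zero {r : ℕ} (h : ¬ Squarefree r) : mu r = 0 := by
  unfold mu
  rw [ArithmeticFunction.moebius_eq_zero_of_not_squarefree h]; simp

lemma key_SS (G : ℕ → ℂ) (hG : IsMult G) (b c : ℕ) (hc : 0 < c)
    (hbc : Nat.Coprime b c) (x : ℝ) (hx : 0 ≤ x) :
    SS G b x = ∑ d ∈ c.divisors, G d * mu d * SS G (b * c) (x / d) := by
  simp only [SS, Finset.mul_sum]
  rw [Finset.sum_sigma']
  rw [← Finset.sum_filter_of_ne (p := fun r => Squarefree r)
    (by intro r _ hr; by_contra h; exact hr (by rw [mu_zero h]; ring)),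
    ← Finset.sum_filter_of_ne (p := fun q : Σ _ : ℕ, ℕ => Squarefree q.1 ∧ Squarefree q.2)
    (by
      intro q _ hq
      constructor
      · by_contra h; exact hq (by rw [mu_zero h]; ring)
      · by_contra h; exact hq (by rw [mu_zero h]; ring))]
  refine Finset.sum_nbij' (fun r => ⟨Nat.gcd r c, r / Nat.gcd r c⟩)
    (fun q => q.1 * q.2) ?_ ?_ ?_ ?_ ?_
  · rintro r hr
    simp only [Finset.mem_filter, Finset.mem_Icc, Nat.le_floor_iff hx] at hr
    obtain ⟨⟨⟨hr1, hrx⟩, hrb⟩, hsq⟩ := hr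
    set d := Nat.gcd r c with hd
    have hdc : d ∣ c := Nat.gcd_dvd_right r c
    have hdr : d ∣ r := Nat.gcd_dvd_left r c
    have hdpos : 0 < d := Nat.gcd_pos_of_pos_left c hr1
    set m := r / d with hm
    have hmd : m * d = r := Nat.div_mul_cancel hdr
    have hmpos : 0 < m := Nat.div_pos (Nat.le_of_dvd hr1 hdr) hdpos
    have hsq' : Squarefree (m * d) := by rwa [hmd]
    have hcop : Nat.Coprime m d := Nat.coprime_of_squarefree_mul hsq'
    have hmb : Nat.Coprime m b := (Nat.Coprime.coprime_dvd_left ⟨d, hmd.symm⟩ hrb)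
    have hmc : Nat.Coprime m c := by
      have h1 : Nat.gcd m c ∣ d :=
        Nat.dvd_gcd (dvd_trans (Nat.gcd_dvd_left m c) ⟨d, hmd.symm⟩) (Nat.gcd_dvd_right m c)
      have := Nat.dvd_gcd (Nat.gcd_dvd_left m c) h1
      rwa [hcop, Nat.dvd_one] at this
    simp only [Finset.mem_filter, Finset.mem_sigma, Nat.mem_divisors, Finset.mem_Icc,
      Nat.le_floor_iff (div_nonneg hx (by positivity : (0:ℝ) ≤ (d:ℝ)))]
    refine ⟨⟨⟨hdc, hc.ne'⟩, ⟨hmpos, ?_⟩, hmb.mul_right hmc⟩,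
      hsq.squarefree_of_dvd hdr, hsq.squarefree_of_dvd ⟨d, hmd.symm⟩⟩
    rw [le_div_iff₀ (by exact_mod_cast hdpos)]
    calc ((m : ℝ) * d) = ((m * d : ℕ) : ℝ) := by push_cast; ring
      _ ≤ x := by rw [hmd]; exact hrx
  · rintro ⟨d, m⟩ hq
    simp only [Finset.mem_filter, Finset.mem_sigma, Nat.mem_divisors, Finset.mem_Icc,
      Nat.le_floor_iff (div_nonneg hx (by positivity : (0:ℝ) ≤ (d:ℝ)))] at hq
    obtain ⟨⟨⟨hdc, _⟩, ⟨hm1, hmx⟩, hmbc⟩, hsd, hsm⟩ := hq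
    have hdpos : 0 < d := Nat.pos_of_dvd_of_pos hdc hc
    have hmc : Nat.Coprime m c := Nat.Coprime.coprime_dvd_right (Dvd.intro_left b rfl) hmbc
    have hmb : Nat.Coprime m b := Nat.Coprime.coprime_dvd_right (Dvd.intro c rfl) hmbc
    have hdm : Nat.Coprime d m := (hmc.coprime_dvd_right hdc).symm
    have hdb : Nat.Coprime d b := (Nat.Coprime.coprime_dvd_left hdc hbc.symm)
    simp only [Finset.mem_filter, Finset.mem_Icc, Nat.le_floor_iff hx]
    refine ⟨⟨⟨Nat.mul_pos hdpos hm1, ?_⟩, hdb.mul hmb⟩, (Nat.squarefree_mul hdm).2 ⟨hsd, hsm⟩⟩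
    calc ((d * m : ℕ) : ℝ) = (d : ℝ) * m := by push_cast; ring
      _ ≤ x := by
        rw [mul_comm, ← le_div_iff₀ (by exact_mod_cast hdpos)]
        exact hmx
  · intro r hr
    exact Nat.mul_div_cancel' (Nat.gcd_dvd_left r c)
  · rintro ⟨d, m⟩ hq
    simp only [Finset.mem_filter, Finset.mem_sigma, Nat.mem_divisors] at hq
    obtain ⟨⟨⟨hdc, _⟩, _, hmbc⟩, _, _⟩ := hq
    have hmc : Nat.Coprime m c := Nat.Coprime.coprime_dvd_right (Dvd.intro_left b rfl) hmbc
    have hg : Nat.gcd (d * m) c = d := by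
      rw [mul_comm, Nat.Coprime.gcd_mul_left_cancel d hmc, Nat.gcd_eq_left hdc]
    have hdpos : 0 < d := Nat.pos_of_dvd_of_pos hdc hc
    simp only [hg, Nat.mul_div_cancel_left _ hdpos]
  · intro r hr
    simp only [Finset.mem_filter, Finset.mem_Icc] at hr
    obtain ⟨⟨⟨hr1, _⟩, hrb⟩, hsq⟩ := hr
    set d := Nat.gcd r c
    have hdr : d ∣ r := Nat.gcd_dvd_left r c
    have hdpos : 0 < d := Nat.gcd_pos_of_pos_left c hr1
    set m := r / d
    have hmd : d * m = r := Nat.mul_div_cancel' hdr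
    have hmpos : 0 < m := Nat.div_pos (Nat.le_of_dvd hr1 hdr) hdpos
    have hsq' : Squarefree (d * m) := by rwa [hmd]
    have hcop : Nat.Coprime d m := Nat.coprime_of_squarefree_mul hsq'
    show G r * mu r = G d * mu d * (G m * mu m)
    rw [← hmd, hG d m hdpos hmpos hcop, mu_mul hcop]
    ring

lemma sqfree_prod_primes (s : Finset ℕ) (hs : ∀ p ∈ s, p.Prime) :
    Squarefree (∏ p ∈ s, p) := by
  induction s using Finset.induction_on with
  | empty => simpa using squarefree_one
  | @insert p s hp ih =>
      rw [Finset.prod_insert hp]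
      have hpp := hs p (Finset.mem_insert_self p s)
      have hrest := ih (fun q hq => hs q (Finset.mem_insert_of_mem hq))
      refine (Nat.squarefree_mul ?_).2 ⟨hpp.prime.squarefree, hrest⟩
      refine Nat.Coprime.prod_right fun q hq => ?_
      exact (Nat.coprime_primes hpp (hs q (Finset.mem_insert_of_mem hq))).2
        (fun h => hp (h ▸ hq))

lemma rad_sqfree (n : ℕ) : Squarefree (rad n) :=
  sqfree_prod_primes _ (fun p hp => Nat.prime_of_mem_primeFactors hp)

lemma cg_prod (G : ℕ → ℂ) (hG : IsMult G) (hG1 : G 1 = 1) (c : ℕ) (hc : 0 < c) :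
    CGsum G c = ∏ p ∈ c.primeFactors, (1 - G p) := by
  classical
  set f : ArithmeticFunction ℂ := ⟨fun n => if n = 0 then 0 else G n, rfl⟩ with hf
  have hfap : ∀ n : ℕ, 0 < n → f n = G n := by
    intro n hn
    simp [hf, ArithmeticFunction.coe_mk, hn.ne']
  have hfm : f.IsMultiplicative := by
    refine ⟨by simpa [hf] using hG1, ?_⟩
    intro m n hmn
    rcases Nat.eq_zero_or_pos m with rfl | hm
    · simp [hf]
    rcases Nat.eq_zero_or_pos n with rfl | hn
    · simp [hf]
    rw [hfap _ (Nat.mul_pos hm hn), hfap _ hm, hfap _ hn]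
    exact hG m n hm hn hmn
  have hrdvd : rad c ∣ c := Nat.prod_primeFactors_dvd c
  have hrs : Squarefree (rad c) := rad_sqfree c
  have hpf : (rad c).primeFactors = c.primeFactors := by
    unfold rad
    exact Nat.primeFactors_prod (fun p hp => Nat.prime_of_mem_primeFactors hp)
  have key := hfm.prodPrimeFactors_one_sub_of_squarefree f hrs
  rw [hpf] at key
  have hstep : CGsum G c = ∑ d ∈ (rad c).divisors, (ArithmeticFunction.moebius d : ℂ) * f d := by
    unfold CGsum
    rw [← Finset.sum_filter_of_ne (s := c.divisors) (p := fun d => Squarefree d)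
      (by intro d _ hd; by_contra h; exact hd (by rw [mu_zero h]; ring))]
    refine Finset.sum_congr ?_ ?_
    · ext d
      simp only [Finset.mem_filter, Nat.mem_divisors]
      constructor
      · rintro ⟨⟨hdc, _⟩, hsd⟩
        refine ⟨?_, hrs.ne_zero⟩
        calc d = ∏ p ∈ d.primeFactors, p := (Nat.prod_primeFactors_of_squarefree hsd).symm
          _ ∣ rad c := Finset.prod_dvd_prod_of_subset _ _ _ (Nat.primeFactors_mono hdc hc.ne')
      · rintro ⟨hdr, _⟩
        exact ⟨⟨hdr.trans hrdvd, hc.ne'⟩, hrs.squarefree_of_dvd hdr⟩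
    · intro d hd
      rw [Nat.mem_divisors] at hd
      have hdpos : 0 < d := Nat.pos_of_dvd_of_pos hd.1 (Nat.pos_of_ne_zero hrs.ne_zero)
      rw [hfap d hdpos]
      unfold mu; ring
  rw [hstep, ← key]
  refine Finset.prod_congr rfl fun p hp => ?_
  rw [hfap p (Nat.prime_of_mem_primeFactors hp).pos]

/-- The `S_G`-recursive formula (Corollary 3.2). -/
theorem stmt_12 (G : ℕ → ℂ) (hG : IsMult G) (b c : ℕ) (hb : 0 < b) (hc : 0 < c)
    (hbc : Nat.Coprime b c) :
    (∀ x : ℝ, 0 ≤ x → SS G b x = ∑ d ∈ c.divisors, G d * mu d * SS G (b * c) (x / d)) ∧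
    (∀ L : ℂ, STendsto G (b * c) L →
      STendsto G b (CGsum G c * L) ∧
      CGsum G c * L = (∏ p ∈ c.primeFactors, (1 - G p)) * L) := by
  constructor
  · intro x hx
    exact key_SS G hG b c hc hbc x hx
  · intro L hL
    have hsum : ∑ d ∈ c.divisors, G d * mu d * L = CGsum G c * L := by
      unfold CGsum; rw [Finset.sum_mul]
    have hT : STendsto G b (CGsum G c * L) := by
      have h2 : Tendsto (fun x : ℝ => ∑ d ∈ c.divisors, G d * mu d * SS G (b * c) (x / d))
          atTop (nhds (∑ d ∈ c.divisors, G d * mu d * L)) := by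
        refine tendsto_finset_sum _ fun d hd => ?_
        have hdpos : (0:ℝ) < d := by
          have := Nat.pos_of_mem_divisors hd
          exact_mod_cast this
        exact Tendsto.const_mul _ (hL.comp (tendsto_id.atTop_div_const hdpos))
      rw [hsum] at h2
      refine h2.congr' ?_
      filter_upwards [eventually_ge_atTop (0:ℝ)] with x hx
      exact (key_SS G hG b c hc hbc x hx).symm
    refine ⟨hT, ?_⟩
    by_cases hG1 : G 1 = 1
    · rw [cg_prod G hG hG1 c hc]
    · have h11 : G 1 = G 1 * G 1 := by
        have := hG 1 1 one_pos one_pos (Nat.coprime_one_left 1)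
        simpa using this
      have hG10 : G 1 = 0 := by
        rcases mul_eq_zero.1 (show G 1 * (G 1 - 1) = 0 by linear_combination -h11) with h | h
        · exact h
        · exact absurd (sub_eq_zero.1 h) hG1
      have hz : ∀ n : ℕ, 0 < n → G n = 0 := by
        intro n hn
        have := hG n 1 hn one_pos (Nat.coprime_one_right n)
        rw [mul_one] at this
        rw [this, hG10, mul_zero]
      have hL0 : L = 0 := by
        have hzero : ∀ x : ℝ, SS G (b * c) x = 0 := by
          intro x
          refine Finset.sum_eq_zero fun r hr => ?_
          simp only [Finset.mem_filter, Finset.mem_Icc] at hr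
          rw [hz r hr.1.1, zero_mul]
        have : Tendsto (fun x : ℝ => SS G (b * c) x) atTop (nhds 0) := by
          simpa [hzero] using (tendsto_const_nhds : Tendsto (fun _ : ℝ => (0:ℂ)) atTop (nhds 0))
        exact tendsto_nhds_unique hL this
      simp [hL0]
end

section
/- Let G : ℕ → ℂ be multiplicative and a ∈ ℕ. Then R_G(a,x) = Σ_{d ∣ a·rad(a)} G(d)·c_d(a)·S_G(a, x/d) for every real x ≥ 0. Consequently, if S_G(a) converges, then R_G(a) converges and R_G(a) = E_G(a)·S_G(a). -/
open Filter Finset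

lemma mu_mul_coprime {m n : ℕ} (h : Nat.Coprime m n) : mu (m * n) = mu m * mu n := by
  unfold mu
  rw [ArithmeticFunction.isMultiplicative_moebius.map_mul_of_coprime h]
  push_cast; ring

lemma mu_eq_zero {n : ℕ} (h : ¬ Squarefree n) : mu n = 0 := by
  unfold mu; rw [ArithmeticFunction.moebius_eq_zero_of_not_squarefree h]; simp

lemma cR_mul {a d r : ℕ} (hdr : Nat.Coprime d r) (hra : Nat.Coprime r a) :
    cR (d * r) a = cR d a * mu r := by
  unfold cR
  rw [Nat.Coprime.gcd_mul_right_cancel d hra, Finset.sum_mul]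
  refine Finset.sum_congr rfl fun e he => ?_
  have hed : e ∣ d := (Nat.mem_divisors.1 he).1.trans (Nat.gcd_dvd_left d a)
  have h1 : d * r / e = (d / e) * r := by
    rw [mul_comm d r, Nat.mul_div_assoc r hed, mul_comm]
  rw [h1, mu_mul_coprime (Nat.Coprime.coprime_dvd_left (Nat.div_dvd_of_dvd hed) hdr)]
  ring

lemma cR_eq_zero {a q p : ℕ} (hq : q ≠ 0) (ha : a ≠ 0) (hp : p.Prime)
    (h : a.factorization p + 2 ≤ q.factorization p) : cR q a = 0 := by
  apply Finset.sum_eq_zero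
  intro e he
  obtain ⟨hed, -⟩ := Nat.mem_divisors.1 he
  have heq : e ∣ q := hed.trans (Nat.gcd_dvd_left q a)
  have hea : e ∣ a := hed.trans (Nat.gcd_dvd_right q a)
  have he0 : e ≠ 0 := by rintro rfl; exact ha (Nat.eq_zero_of_zero_dvd hea)
  have hqe0 : q / e ≠ 0 := by
    have := Nat.div_mul_cancel heq
    intro h0; rw [h0, zero_mul] at this; exact hq this.symm
  have hep : e.factorization p ≤ a.factorization p :=
    Finsupp.le_def.1 ((Nat.factorization_le_iff_dvd he0 ha).2 hea) p
  have h2 : 2 ≤ (q / e).factorization p := by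
    rw [Nat.factorization_div heq, Finsupp.tsub_apply]
    omega
  have hpp : p ^ 2 ∣ q / e := (Nat.Prime.pow_dvd_iff_le_factorization hp hqe0).2 h2
  have hns : ¬ Squarefree (q / e) := fun hs =>
    hp.not_isUnit (hs p (by rwa [← pow_two]))
  rw [mu_eq_zero hns, mul_zero]

lemma rad_fact {a p : ℕ} (ha : a ≠ 0) (hp : p.Prime) (hpa : p ∣ a) :
    (a * rad a).factorization p = a.factorization p + 1 := by
  have hr0 : rad a ≠ 0 := by
    unfold rad
    exact Finset.prod_ne_zero_iff.2 fun q hq => (Nat.prime_of_mem_primeFactors hq).ne_zero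
  rw [Nat.factorization_mul ha hr0, Finsupp.add_apply]
  congr 1
  unfold rad
  rw [Nat.factorization_prod (fun q hq => (Nat.prime_of_mem_primeFactors hq).ne_zero),
    Finset.sum_apply']
  rw [Finset.sum_eq_single p]
  · rw [hp.factorization]; simp
  · intro q hq hne
    rw [(Nat.prime_of_mem_primeFactors hq).factorization, Finsupp.single_apply]
    simp [hne]
  · intro hps; exact absurd (Nat.mem_primeFactors.2 ⟨hp, hpa, ha⟩) hps


/-- The `RS` formula (Corollary 3.3). -/
theorem stmt_13 (G : ℕ → ℂ) (hG : IsMult G) (a : ℕ) (ha : 0 < a) :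
    (∀ x : ℝ, 0 ≤ x →
      RS G a x = ∑ d ∈ (a * rad a).divisors, G d * cR d a * SS G a (x / d)) ∧
    (∀ L : ℂ, STendsto G a L → RTendsto G a (EG G a * L)) := by
  have ha0 : a ≠ 0 := ha.ne'
  have hrad : rad a ∣ a := Nat.prod_primeFactors_dvd a
  set A := a * rad a with hAdef
  have hA0 : A ≠ 0 := by
    have : rad a ≠ 0 := fun h => ha0 (Nat.eq_zero_of_zero_dvd (h ▸ hrad))
    exact mul_ne_zero ha0 this
  have hcopA : ∀ r : ℕ, Nat.gcd r a = 1 → Nat.Coprime r A := by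
    intro r hra
    exact Nat.Coprime.mul_right hra (Nat.Coprime.coprime_dvd_right hrad hra)
  have hgcd_dr : ∀ d r : ℕ, d ∣ A → Nat.gcd r a = 1 → Nat.gcd (d * r) A = d := by
    intro d r hdA hra
    rw [Nat.Coprime.gcd_mul_right_cancel d (hcopA r hra)]
    exact Nat.gcd_eq_left hdA
  have part1 : ∀ x : ℝ, 0 ≤ x →
      RS G a x = ∑ d ∈ A.divisors, G d * cR d a * SS G a (x / d) := by
    intro x hx
    set N := ⌊x⌋₊ with hN
    -- rewrite RHS as a sum over pairs
    have hrhs : ∀ d ∈ A.divisors, SS G a (x / d) =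
        ∑ r ∈ (Finset.Icc 1 N).filter (fun r => Nat.gcd r a = 1 ∧ d * r ≤ N),
          G r * mu r := by
      intro d hd
      obtain ⟨hdA, -⟩ := Nat.mem_divisors.1 hd
      have hd0 : 0 < d := Nat.pos_of_dvd_of_pos hdA (Nat.pos_of_ne_zero hA0)
      have hd0' : (0:ℝ) < d := by exact_mod_cast hd0
      unfold SS
      congr 1
      ext r
      simp only [Finset.mem_filter, Finset.mem_Icc]
      constructor
      · rintro ⟨⟨h1, h2⟩, h3⟩
        have hrx : (r : ℝ) ≤ x / d := (Nat.le_floor_iff (by positivity)).1 h2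
        have hdr : ((d * r : ℕ) : ℝ) ≤ x := by
          push_cast
          calc (d : ℝ) * r = r * d := by ring
            _ ≤ x := (le_div_iff₀ hd0').1 hrx
        have hdrN : d * r ≤ N := Nat.le_floor hdr
        exact ⟨⟨h1, le_trans (Nat.le_mul_of_pos_left r hd0) hdrN⟩, h3, hdrN⟩
      · rintro ⟨⟨h1, h2⟩, h3, h4⟩
        refine ⟨⟨h1, ?_⟩, h3⟩
        apply Nat.le_floor
        rw [le_div_iff₀ hd0']
        have h5 : ((d * r : ℕ) : ℝ) ≤ x :=
          le_trans (Nat.cast_le.2 h4) (Nat.floor_le hx)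
        push_cast at h5
        linarith
    have step1 : (∑ d ∈ A.divisors, G d * cR d a * SS G a (x / d))
        = ∑ p ∈ (A.divisors ×ˢ Finset.Icc 1 N).filter
            (fun p => Nat.gcd p.2 a = 1 ∧ p.1 * p.2 ≤ N),
          G p.1 * cR p.1 a * (G p.2 * mu p.2) := by
      rw [Finset.sum_filter, Finset.sum_product]
      refine Finset.sum_congr rfl fun d hd => ?_
      rw [hrhs d hd, Finset.sum_filter, Finset.mul_sum]
      refine Finset.sum_congr rfl fun r _ => ?_
      rw [mul_ite, mul_zero]
    rw [step1]
    -- split LHS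
    unfold RS
    rw [← hN, ← Finset.sum_filter_add_sum_filter_not (Finset.Icc 1 N)
      (fun q => Nat.gcd (q / Nat.gcd q A) a = 1)]
    have hbad : ∑ q ∈ (Finset.Icc 1 N).filter
        (fun q => ¬ Nat.gcd (q / Nat.gcd q A) a = 1), G q * cR q a = 0 := by
      apply Finset.sum_eq_zero
      intro q hq
      obtain ⟨hqI, hng⟩ := Finset.mem_filter.1 hq
      have hq1 : 1 ≤ q := (Finset.mem_Icc.1 hqI).1
      have hq0 : q ≠ 0 := by omega
      set g := Nat.gcd q A with hg
      have hgq : g ∣ q := Nat.gcd_dvd_left q A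
      have hr0 : q / g ≠ 0 := by
        intro h0
        have := Nat.mul_div_cancel' hgq
        rw [h0, mul_zero] at this; exact hq0 this.symm
      have hG00 : Nat.gcd (q / g) a ≠ 0 := fun h =>
        ha0 (Nat.eq_zero_of_gcd_eq_zero_right h)
      set p := (Nat.gcd (q / g) a).minFac with hpdef
      have hp : p.Prime := Nat.minFac_prime hng
      have hpr : p ∣ q / g := (Nat.minFac_dvd _).trans (Nat.gcd_dvd_left _ _)
      have hpa : p ∣ a := (Nat.minFac_dvd _).trans (Nat.gcd_dvd_right _ _)
      have hvg : g.factorization p = min (q.factorization p) (A.factorization p) := by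
        rw [hg, Nat.factorization_gcd hq0 hA0, Finsupp.inf_apply]
      have hvA : A.factorization p = a.factorization p + 1 := rad_fact ha0 hp hpa
      have hv1 : 1 ≤ (q / g).factorization p :=
        hp.factorization_pos_of_dvd hr0 hpr
      have hdiv : (q / g).factorization p = q.factorization p - g.factorization p := by
        rw [Nat.factorization_div hgq, Finsupp.tsub_apply]
      have key : a.factorization p + 2 ≤ q.factorization p := by omega
      rw [cR_eq_zero hq0 ha0 hp key, mul_zero]
    rw [hbad, add_zero]
    -- bijection between good q and pairs
    symm
    refine Finset.sum_nbij' (fun p => p.1 * p.2)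
      (fun q => (Nat.gcd q A, q / Nat.gcd q A)) ?_ ?_ ?_ ?_ ?_
    · rintro ⟨d, r⟩ hp
      obtain ⟨hmem, hra, hle⟩ := Finset.mem_filter.1 hp
      obtain ⟨hdm, hrm⟩ := Finset.mem_product.1 hmem
      obtain ⟨hdA, -⟩ := Nat.mem_divisors.1 hdm
      have hd0 : 0 < d := Nat.pos_of_dvd_of_pos hdA (Nat.pos_of_ne_zero hA0)
      have hr1 : 1 ≤ r := (Finset.mem_Icc.1 hrm).1
      refine Finset.mem_filter.2 ⟨Finset.mem_Icc.2 ⟨Nat.one_le_iff_ne_zero.2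
        (Nat.mul_ne_zero hd0.ne' (by omega)), hle⟩, ?_⟩
      simp only
      rw [hgcd_dr d r hdA hra, Nat.mul_div_cancel_left r hd0]
      exact hra
    · intro q hq
      obtain ⟨hqI, hgood⟩ := Finset.mem_filter.1 hq
      obtain ⟨hq1, hqN⟩ := Finset.mem_Icc.1 hqI
      have hq0 : q ≠ 0 := by omega
      have hgq : Nat.gcd q A ∣ q := Nat.gcd_dvd_left q A
      have hg1 : 1 ≤ Nat.gcd q A := Nat.pos_of_dvd_of_pos hgq (by omega)
      refine Finset.mem_filter.2 ⟨Finset.mem_product.2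
        ⟨Nat.mem_divisors.2 ⟨Nat.gcd_dvd_right q A, hA0⟩, Finset.mem_Icc.2
          ⟨Nat.one_le_div_iff hg1 |>.2 (Nat.le_of_dvd (by omega) hgq),
           le_trans (Nat.div_le_self q _) hqN⟩⟩, hgood, ?_⟩
      simp only
      rw [Nat.mul_div_cancel' hgq]
      exact hqN
    · rintro ⟨d, r⟩ hp
      obtain ⟨hmem, hra, hle⟩ := Finset.mem_filter.1 hp
      obtain ⟨hdm, hrm⟩ := Finset.mem_product.1 hmem
      obtain ⟨hdA, -⟩ := Nat.mem_divisors.1 hdm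
      have hd0 : 0 < d := Nat.pos_of_dvd_of_pos hdA (Nat.pos_of_ne_zero hA0)
      have h1 := hgcd_dr d r hdA hra
      simp only [h1, Nat.mul_div_cancel_left r hd0]
    · intro q hq
      obtain ⟨hqI, hgood⟩ := Finset.mem_filter.1 hq
      simp only
      exact Nat.mul_div_cancel' (Nat.gcd_dvd_left q A)
    · rintro ⟨d, r⟩ hp
      obtain ⟨hmem, hra, hle⟩ := Finset.mem_filter.1 hp
      obtain ⟨hdm, hrm⟩ := Finset.mem_product.1 hmem
      obtain ⟨hdA, -⟩ := Nat.mem_divisors.1 hdm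
      have hd0 : 0 < d := Nat.pos_of_dvd_of_pos hdA (Nat.pos_of_ne_zero hA0)
      have hr0 : 0 < r := (Finset.mem_Icc.1 hrm).1
      have hdr : Nat.Coprime d r :=
        (Nat.Coprime.coprime_dvd_right hdA (hcopA r hra)).symm
      simp only
      rw [hG d r hd0 hr0 hdr, cR_mul hdr hra]
      ring
  refine ⟨part1, ?_⟩
  intro L hL
  have hkey : (fun x : ℝ => RS G a x) =ᶠ[atTop]
      (fun x => ∑ d ∈ A.divisors, G d * cR d a * SS G a (x / d)) :=
    (eventually_ge_atTop (0:ℝ)).mono fun x hx => part1 x hx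
  have hlim : Tendsto (fun x : ℝ => ∑ d ∈ A.divisors, G d * cR d a * SS G a (x / d))
      atTop (nhds (∑ d ∈ A.divisors, G d * cR d a * L)) := by
    refine tendsto_finset_sum _ fun d hd => ?_
    obtain ⟨hdA, -⟩ := Nat.mem_divisors.1 hd
    have hd0 : (0:ℝ) < d := by
      exact_mod_cast Nat.pos_of_dvd_of_pos hdA (Nat.pos_of_ne_zero hA0)
    exact (hL.comp (tendsto_id.atTop_div_const hd0)).const_mul _
  have hEG : EG G a * L = ∑ d ∈ A.divisors, G d * cR d a * L := by
    unfold EG; rw [Finset.sum_mul]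
  show Tendsto (fun x : ℝ => RS G a x) atTop (nhds (EG G a * L))
  rw [hEG]
  exact hlim.congr' hkey.symm
end
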